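/- arXiv:1808.06129 — 3 statements merged into one kernel-verified Lean document; each statement's English description precedes it below -/
import Mathlib

section
/- Let V(x,y) = a(x)b(y) where a ∈ C¹(ℝ) is bounded with a(x) > 0 for all x ∈ ℝ, and b ∈ C²(ℝ) is 1-periodic with b ≤ 0 and max b = 0. Let u₀ : ℝ → ℝ be bounded and Lipschitz with Lipschitz constant Lip(u₀), and let ‖V‖_∞ = sup_{(x,y)} |V(x,y)|. Fix ε ∈ (0,1), x₀ ∈ ℝ, t₀ > 0. Let m be the infimum of A^ε[η] over all differentiable paths η : [0, t₀/ε] → ℝ with η(0) = x₀/ε for which there exists a constant r ≤ 0 with ½|η′(s)|² + V(εη(s), η(s)) = r for all s ∈ [0, t₀/ε] (the Euler–Lagrange trajectories of nonpositive energy; this class is nonempty). Then |m − u₀(x₀)| ≤ ( √(2‖V‖_∞) + Lip(u₀) )·ε. -/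
open Set MeasureTheory intervalIntegral Real

/-- The action of a path `η` (with derivative `η'`) on `[0, t₀/ε]`:
`A^ε[η] = ε∫₀^{t₀/ε} (½|η′|² − V(εη, η)) ds + u₀(εη(t₀/ε))`. -/
noncomputable def actionEps (V : ℝ → ℝ → ℝ) (u₀ : ℝ → ℝ) (ε t₀ : ℝ)
    (η η' : ℝ → ℝ) : ℝ :=
  ε * (∫ s in (0 : ℝ)..(t₀ / ε), ((η' s) ^ 2 / 2 - V (ε * η s) (η s)))
    + u₀ (ε * η (t₀ / ε))


lemma periodic_bdd {f : ℝ → ℝ} (hf : Continuous f) (hp : Function.Periodic f 1) :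
    ∃ C : ℝ, 0 ≤ C ∧ ∀ y, |f y| ≤ C := by
  obtain ⟨C, hC⟩ := (isCompact_Icc (a := (0:ℝ)) (b := 1)).exists_bound_of_continuousOn
    hf.continuousOn
  refine ⟨C, le_trans (abs_nonneg (f 0)) (by simpa using hC 0 (by norm_num)), fun y => ?_⟩
  have h1 : f y = f (Int.fract y) := by
    have := hp.sub_int_mul_eq (x := y) (n := ⌊y⌋)
    rw [mul_one, Int.self_sub_floor] at this
    exact this.symm
  rw [h1]
  simpa using hC _ ⟨Int.fract_nonneg y, (Int.fract_lt_one y).le⟩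

lemma periodic_deriv' {f : ℝ → ℝ} (hp : Function.Periodic f 1) :
    Function.Periodic (deriv f) 1 := by
  intro x
  have h : deriv (fun y => f (y + 1)) x = deriv f (x + 1) := deriv_comp_add_const f 1 x
  rw [← h]
  congr 1
  funext y
  exact hp y

lemma quad_bound {b : ℝ → ℝ} {K z : ℝ} (hbd : Differentiable ℝ b)
    (hlip : ∀ u v : ℝ, |deriv b u - deriv b v| ≤ K * |u - v|)
    (hbNonpos : ∀ y, b y ≤ 0) (hz : b z = 0) : ∀ y, -b y ≤ K * (y - z) ^ 2 := by
  have hK0 : 0 ≤ K := le_trans (abs_nonneg _) (by simpa using hlip 0 1)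
  have hmax : IsLocalMax b z :=
    Filter.Eventually.of_forall (fun y => (hbNonpos y).trans_eq hz.symm)
  have hdz : deriv b z = 0 := hmax.deriv_eq_zero
  intro y
  rcases lt_trichotomy y z with hlt | heq | hgt
  · obtain ⟨c, hc, hceq⟩ := exists_deriv_eq_slope b hlt hbd.continuous.continuousOn
      (hbd.differentiableOn)
    have hne : z - y ≠ 0 := sub_ne_zero.mpr (by linarith)
    have hby : b z - b y = deriv b c * (z - y) := by rw [hceq, div_mul_cancel₀ _ hne]
    have h1 : |deriv b c| ≤ K * |c - z| := by simpa [hdz] using hlip c z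
    have h2 : |c - z| ≤ z - y := by
      rw [abs_of_nonpos (by linarith [hc.2])]
      linarith [hc.1]
    have h3 : -b y = deriv b c * (z - y) := by rw [← hby, hz]; ring
    calc -b y ≤ |deriv b c * (z - y)| := by rw [h3]; exact le_abs_self _
      _ = |deriv b c| * (z - y) := by
          rw [abs_mul, abs_of_nonneg (by linarith : (0:ℝ) ≤ z - y)]
      _ ≤ (K * (z - y)) * (z - y) := by
          apply mul_le_mul_of_nonneg_right _ (by linarith)
          exact h1.trans (mul_le_mul_of_nonneg_left h2 hK0)
      _ = K * (y - z) ^ 2 := by ring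
  · simp [heq, hz]
  · obtain ⟨c, hc, hceq⟩ := exists_deriv_eq_slope b hgt hbd.continuous.continuousOn
      (hbd.differentiableOn)
    have hne : y - z ≠ 0 := sub_ne_zero.mpr (by linarith)
    have hby : b y - b z = deriv b c * (y - z) := by rw [hceq, div_mul_cancel₀ _ hne]
    have h1 : |deriv b c| ≤ K * |c - z| := by simpa [hdz] using hlip c z
    have h2 : |c - z| ≤ y - z := by
      rw [abs_of_nonneg (by linarith [hc.1])]
      linarith [hc.2]
    have h3 : -b y = -(deriv b c * (y - z)) := by rw [← hby, hz]; ring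
    calc -b y ≤ |deriv b c * (y - z)| := by rw [h3]; exact neg_le_abs _
      _ = |deriv b c| * (y - z) := by
          rw [abs_mul, abs_of_nonneg (by linarith : (0:ℝ) ≤ y - z)]
      _ ≤ (K * (y - z)) * (y - z) := by
          apply mul_le_mul_of_nonneg_right _ (by linarith)
          exact h1.trans (mul_le_mul_of_nonneg_left h2 hK0)
      _ = K * (y - z) ^ 2 := by ring

lemma eq_of_hits {η η' : ℝ → ℝ} {s₁ Tt z' Kg : ℝ}
    (hs : s₁ ≤ Tt)
    (hd : ∀ s ∈ Set.Icc s₁ Tt, HasDerivAt η (η' s) s)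
    (hstar : η s₁ = z')
    (hbound : ∀ s ∈ Set.Icc s₁ Tt, |η' s| ≤ Kg * |η s - z'|) :
    η Tt = z' := by
  have hcont : ContinuousOn (fun s => η s - z') (Set.Icc s₁ Tt) := fun s hs' =>
    ((hd s hs').continuousAt.sub continuousAt_const).continuousWithinAt
  have hmain := norm_le_gronwallBound_of_norm_deriv_right_le (f := fun s => η s - z')
      (f' := η') (δ := 0) (K := Kg) (ε := 0) (a := s₁) (b := Tt) hcont
      (fun s hs' => ((hd s (Set.Ico_subset_Icc_self hs')).sub_const z').hasDerivWithinAt)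
      (by simp [hstar])
      (fun s hs' => by
        simpa [Real.norm_eq_abs] using hbound s (Set.Ico_subset_Icc_self hs'))
  have h2 := hmain Tt (Set.right_mem_Icc.mpr hs)
  rw [gronwallBound_ε0_δ0] at h2
  have h3 : η Tt - z' = 0 := by
    have := norm_nonneg (η Tt - z')
    have : ‖η Tt - z'‖ = 0 := le_antisymm h2 this
    exact norm_eq_zero.mp this
  linarith [h3]

lemma lower_est
    (a b : ℝ → ℝ)
    {M K : ℝ} (haPos : ∀ x, 0 < a x) (haM : ∀ x, a x ≤ M)
    (hK : 0 ≤ K)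
    (hquad : ∀ z' : ℝ, b z' = 0 → ∀ y, -b y ≤ K * (y - z') ^ 2)
    (hbCont : Continuous b)
    (hbNonpos : ∀ y, b y ≤ 0) {y₀ : ℝ} (hy₀ : b y₀ = 0)
    (hbPer : Function.Periodic b 1)
    (u₀ : ℝ → ℝ) (Lu : ℝ) (hLu : ∀ x y, |u₀ x - u₀ y| ≤ Lu * |x - y|)
    {ε x₀ t₀ : ℝ} (hε : 0 < ε) (ht₀ : 0 < t₀)
    {η η' : ℝ → ℝ}
    (hd : ∀ s ∈ Set.Icc (0:ℝ) (t₀/ε), HasDerivAt η (η' s) s)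
    (h0 : η 0 = x₀ / ε)
    {r : ℝ} (hr : r ≤ 0)
    (hE : ∀ s ∈ Set.Icc (0:ℝ) (t₀/ε), (η' s)^2/2 + a (ε * η s) * b (η s) = r) :
    u₀ x₀ - Lu * ε ≤ actionEps (fun x y => a x * b y) u₀ ε t₀ η η' := by
  set T := t₀ / ε with hT_def
  have hT : 0 < T := div_pos ht₀ hε
  have hM0 : 0 < M := (haPos 0).trans_le (haM 0)
  have hLu0 : 0 ≤ Lu := le_trans (abs_nonneg _) (by simpa using hLu 0 1)
  -- integral nonneg
  have hInt : 0 ≤ ∫ s in (0:ℝ)..T, ((η' s) ^ 2 / 2 - a (ε * η s) * b (η s)) := by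
    apply intervalIntegral.integral_nonneg hT.le
    intro s hs
    have hEs := hE s hs
    nlinarith [sq_nonneg (η' s)]
  -- set up zeros
  set X := x₀ / ε with hX_def
  set z : ℝ := y₀ + ⌊X - y₀⌋ with hz_def
  have hbz : b z = 0 := by
    have h := hbPer.sub_int_mul_eq (x := y₀ + (⌊X - y₀⌋ : ℤ)) (n := ⌊X - y₀⌋)
    rw [mul_one, add_sub_cancel_right] at h
    rw [hz_def, ← h]
    exact hy₀
  have hbz1 : b (z + 1) = 0 := by rw [hbPer z, hbz]
  have hzle : z ≤ X := by
    have := Int.floor_le (X - y₀)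
    rw [hz_def]; linarith
  have hXle : X ≤ z + 1 := by
    have := Int.lt_floor_add_one (X - y₀)
    rw [hz_def]; push_cast; linarith
  -- continuity of η on [0,T]
  have hηcont : ContinuousOn η (Set.Icc 0 T) := fun s hs =>
    (hd s hs).continuousAt.continuousWithinAt
  -- key lemma: if η hits a zero of b, it stays there
  have key : ∀ z' : ℝ, b z' = 0 → ∀ s₁ ∈ Set.Icc (0:ℝ) T, η s₁ = z' → η T = z' := by
    intro z' hbz' s₁ hs₁ hval
    -- r = 0
    have hr0 : r = 0 := by
      have hEs := hE s₁ hs₁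
      rw [hval, hbz'] at hEs
      nlinarith [sq_nonneg (η' s₁)]
    apply eq_of_hits (Kg := Real.sqrt (2 * M * K)) hs₁.2
      (fun s hs => hd s ⟨le_trans hs₁.1 hs.1, hs.2⟩) hval
    intro s hs
    have hs' : s ∈ Set.Icc (0:ℝ) T := ⟨le_trans hs₁.1 hs.1, hs.2⟩
    have hEs := hE s hs'
    rw [hr0] at hEs
    have hsq : (η' s) ^ 2 ≤ 2 * M * K * (η s - z') ^ 2 := by
      have h1 : -b (η s) ≤ K * (η s - z') ^ 2 := hquad z' hbz' (η s)
      have h2 : 0 < a (ε * η s) := haPos _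
      have h3 : a (ε * η s) ≤ M := haM _
      have h4 : 0 ≤ -b (η s) := neg_nonneg.mpr (hbNonpos _)
      nlinarith [sq_nonneg (η s - z')]
    calc |η' s| = Real.sqrt ((η' s) ^ 2) := (Real.sqrt_sq_eq_abs _).symm
      _ ≤ Real.sqrt (2 * M * K * (η s - z') ^ 2) := Real.sqrt_le_sqrt hsq
      _ = Real.sqrt (2 * M * K) * |η s - z'| := by
          rw [Real.sqrt_mul (by positivity), Real.sqrt_sq_eq_abs]
  -- confinement of η T
  have hconf : z ≤ η T ∧ η T ≤ z + 1 := by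
    constructor
    · by_contra hlt
      push_neg at hlt
      have hmem : z ∈ Set.Icc (η T) (η 0) := ⟨hlt.le, by rw [h0]; exact hzle⟩
      obtain ⟨s₁, hs₁, hval⟩ := intermediate_value_Icc' hT.le hηcont hmem
      have := key z hbz s₁ hs₁ hval
      linarith
    · by_contra hlt
      push_neg at hlt
      have hmem : z + 1 ∈ Set.Icc (η 0) (η T) := ⟨by rw [h0]; exact hXle, hlt.le⟩
      obtain ⟨s₁, hs₁, hval⟩ := intermediate_value_Icc hT.le hηcont hmem
      have := key (z + 1) hbz1 s₁ hs₁ hval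
      linarith
  -- final bound
  have hdist : |η T - X| ≤ 1 := abs_le.mpr ⟨by linarith [hconf.1], by linarith [hconf.2]⟩
  have hx₀ : ε * X = x₀ := by rw [hX_def]; field_simp
  have hu : |u₀ (ε * η T) - u₀ x₀| ≤ Lu * ε := by
    calc |u₀ (ε * η T) - u₀ x₀| ≤ Lu * |ε * η T - x₀| := hLu _ _
      _ = Lu * (ε * |η T - X|) := by
          rw [← hx₀, ← mul_sub, abs_mul, abs_of_pos hε]
      _ ≤ Lu * (ε * 1) := by
          apply mul_le_mul_of_nonneg_left _ hLu0
          exact mul_le_mul_of_nonneg_left hdist hε.le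
      _ = Lu * ε := by ring
  have habs := abs_le.mp hu
  unfold actionEps
  have hεI : 0 ≤ ε * ∫ s in (0:ℝ)..T, ((η' s) ^ 2 / 2 - a (ε * η s) * b (η s)) :=
    mul_nonneg hε.le hInt
  simp only [← hT_def]
  linarith [habs.1]

set_option maxHeartbeats 1000000 in
lemma upper_est
    (a b : ℝ → ℝ) (haCont : Continuous a)
    {M K : ℝ} (haPos : ∀ x, 0 < a x) (haM : ∀ x, a x ≤ M)
    (hK : 0 ≤ K)
    (hquad : ∀ z' : ℝ, b z' = 0 → ∀ y, -b y ≤ K * (y - z') ^ 2)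
    (hbCont : Continuous b)
    (hbNonpos : ∀ y, b y ≤ 0) {y₀ : ℝ} (hy₀ : b y₀ = 0)
    (hbPer : Function.Periodic b 1)
    (u₀ : ℝ → ℝ) (Lu : ℝ) (hLu : ∀ x y, |u₀ x - u₀ y| ≤ Lu * |x - y|)
    {Vn : ℝ} (hVnle : ∀ x y, a x * (-b y) ≤ Vn)
    {ε x₀ t₀ : ℝ} (hε : 0 < ε) (ht₀ : 0 < t₀) :
    ∃ η η' : ℝ → ℝ,
      (∀ s ∈ Set.Icc (0:ℝ) (t₀/ε), HasDerivAt η (η' s) s) ∧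
      η 0 = x₀ / ε ∧
      (∃ r : ℝ, r ≤ 0 ∧ ∀ s ∈ Set.Icc (0:ℝ) (t₀/ε),
        (η' s)^2/2 + a (ε * η s) * b (η s) = r) ∧
      actionEps (fun x y => a x * b y) u₀ ε t₀ η η'
        ≤ u₀ x₀ + (Real.sqrt (2 * Vn) + Lu) * ε := by
  set T := t₀ / ε with hT_def
  have hT : 0 < T := div_pos ht₀ hε
  have hM0 : 0 < M := (haPos 0).trans_le (haM 0)
  have hLu0 : 0 ≤ Lu := le_trans (abs_nonneg _) (by simpa using hLu 0 1)
  set X := x₀ / ε with hX_def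
  have hx₀ : ε * X = x₀ := by rw [hX_def]; field_simp
  have hVn0 : 0 ≤ Vn :=
    le_trans (mul_nonneg (haPos 0).le (neg_nonneg.mpr (hbNonpos 0))) (hVnle 0 0)
  have hsqVn : 0 ≤ Real.sqrt (2 * Vn) := Real.sqrt_nonneg _
  -- periodic zeros
  have hzero : ∀ n : ℤ, b (y₀ + n) = 0 := by
    intro n
    have h := hbPer.sub_int_mul_eq (x := y₀ + (n : ℤ)) (n := n)
    rw [mul_one, add_sub_cancel_right] at h
    rw [← h]; exact hy₀
  rcases eq_or_lt_of_le (hbNonpos X) with hbX | hbX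
  · -- b X = 0 : constant path
    refine ⟨fun _ => X, fun _ => 0, fun s _ => hasDerivAt_const s X, rfl,
      ⟨0, le_refl 0, fun s _ => by simp [hbX]⟩, ?_⟩
    have heq : actionEps (fun x y => a x * b y) u₀ ε t₀ (fun _ => X) (fun _ => 0)
        = u₀ x₀ := by
      unfold actionEps
      norm_num [hbX, hx₀]
    rw [heq]
    nlinarith [mul_nonneg (add_nonneg hsqVn hLu0) hε.le]
  · -- b X < 0 : travel to the nearest zero below along the zero-energy trajectory
    have hbXneg : b X < 0 := hbX
    -- the zero of b just below X
    set Sd : Set ℝ := {y | y ≤ X ∧ b y = 0} with hSd_def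
    have hSdne : Sd.Nonempty := by
      refine ⟨y₀ + ⌊X - y₀⌋, ?_, hzero _⟩
      have := Int.floor_le (X - y₀); linarith
    have hSdbdd : BddAbove Sd := ⟨X, fun y hy => hy.1⟩
    have hSdcl : IsClosed Sd := by
      have heq : Sd = Iic X ∩ b ⁻¹' {0} := by ext y; simp [hSd_def]
      rw [heq]
      exact isClosed_Iic.inter (isClosed_singleton.preimage hbCont)
    set z := sSup Sd with hz_def
    have hzmem : z ∈ Sd := hSdcl.csSup_mem hSdne hSdbdd
    have hbz : b z = 0 := hzmem.2
    have hzltX : z < X := lt_of_le_of_ne hzmem.1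
      (fun h => by rw [h] at hbz; exact hbXneg.ne hbz)
    have hzX1 : X - z < 1 := by
      have hmem : y₀ + (⌊X - y₀⌋ : ℤ) ∈ Sd :=
        ⟨by have := Int.floor_le (X - y₀); linarith, hzero _⟩
      have h1 := le_csSup hSdbdd hmem
      have h2 := Int.lt_floor_add_one (X - y₀)
      rw [← hz_def] at h1
      linarith
    -- the zero of b just above X
    set Su : Set ℝ := {y | X ≤ y ∧ b y = 0} with hSu_def
    have hSune : Su.Nonempty := by
      refine ⟨y₀ + ⌈X - y₀⌉, ?_, hzero _⟩
      have := Int.le_ceil (X - y₀); linarith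
    have hSubdd : BddBelow Su := ⟨X, fun y hy => hy.1⟩
    have hSucl : IsClosed Su := by
      have heq : Su = Ici X ∩ b ⁻¹' {0} := by ext y; simp [hSu_def]
      rw [heq]
      exact isClosed_Ici.inter (isClosed_singleton.preimage hbCont)
    set Z := sInf Su with hZ_def
    have hZmem : Z ∈ Su := hSucl.csInf_mem hSune hSubdd
    have hbZ : b Z = 0 := hZmem.2
    have hXltZ : X < Z := lt_of_le_of_ne hZmem.1
      (fun h => by rw [← h] at hbZ; exact hbXneg.ne hbZ)
    have hbneg : ∀ y ∈ Ioo z Z, b y < 0 := by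
      intro y hy
      rcases eq_or_lt_of_le (hbNonpos y) with h | h
      · rcases le_or_gt y X with h2 | h2
        · exact absurd (le_csSup hSdbdd ⟨h2, h⟩) (not_le.mpr hy.1)
        · exact absurd (csInf_le hSubdd ⟨h2.le, h⟩) (not_le.mpr hy.2)
      · exact h
    have hXmem : X ∈ Ioo z Z := ⟨hzltX, hXltZ⟩
    -- speed field g
    set g : ℝ → ℝ := fun y => Real.sqrt (2 * a (ε * y) * (-b y)) with hg_def
    have hgcont : Continuous g := by
      apply Real.continuous_sqrt.comp
      exact (continuous_const.mul (haCont.comp (continuous_const.mul continuous_id))).mul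
        hbCont.neg
    have hrad : ∀ y, 0 ≤ 2 * a (ε * y) * (-b y) := fun y =>
      mul_nonneg (by nlinarith [haPos (ε * y)]) (neg_nonneg.mpr (hbNonpos y))
    have hgsq : ∀ y, g y ^ 2 = 2 * a (ε * y) * (-b y) := fun y => Real.sq_sqrt (hrad y)
    have hgsq' : ∀ y, g y ^ 2 = -(2 * (a (ε * y) * b y)) := fun y => by rw [hgsq]; ring
    have hgpos : ∀ y ∈ Ioo z Z, 0 < g y := fun y hy =>
      Real.sqrt_pos.mpr (by nlinarith [haPos (ε * y), hbneg y hy])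
    have hgle : ∀ y, g y ≤ Real.sqrt (2 * Vn) := fun y =>
      Real.sqrt_le_sqrt (by nlinarith [hVnle (ε * y) y])
    -- linear bound for g near z
    set L : ℝ := Real.sqrt (2 * M * K) with hL_def
    have hKpos : 0 < K := by
      by_contra h
      push_neg at h
      have h1 := hquad z hbz X
      nlinarith [sq_nonneg (X - z)]
    have hLpos : 0 < L := Real.sqrt_pos.mpr (by positivity)
    have hglin : ∀ y, z ≤ y → g y ≤ L * (y - z) := by
      intro y hy
      have h1 : 2 * a (ε * y) * (-b y) ≤ 2 * M * K * (y - z) ^ 2 := by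
        have h2 := hquad z hbz y
        nlinarith [haPos (ε * y), haM (ε * y), neg_nonneg.mpr (hbNonpos y)]
      calc g y ≤ Real.sqrt (2 * M * K * (y - z) ^ 2) := Real.sqrt_le_sqrt h1
        _ = L * |y - z| := by rw [Real.sqrt_mul (by positivity), Real.sqrt_sq_eq_abs]
        _ = L * (y - z) := by rw [abs_of_nonneg (by linarith)]
    -- the time function τ
    have hginv_contAt : ∀ y ∈ Ioo z Z, ContinuousAt (fun w => (g w)⁻¹) y := fun y hy =>
      hgcont.continuousAt.inv₀ (hgpos y hy).ne'
    have hIntegrable : ∀ {y1 y2 : ℝ}, y1 ∈ Ioo z Z → y2 ∈ Ioo z Z →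
        IntervalIntegrable (fun w => (g w)⁻¹) volume y1 y2 := by
      intro y1 y2 h1 h2
      apply ContinuousOn.intervalIntegrable
      exact fun w hw =>
        (hginv_contAt w ((Set.ordConnected_Ioo.uIcc_subset h1 h2) hw)).continuousWithinAt
    set τ : ℝ → ℝ := fun y => ∫ w in y..X, (g w)⁻¹ with hτ_def
    have hτX : τ X = 0 := intervalIntegral.integral_same
    have hτderiv : ∀ y ∈ Ioo z Z, HasDerivAt τ (-(g y)⁻¹) y := fun y hy =>
      intervalIntegral.integral_hasDerivAt_left (hIntegrable hy hXmem)
        (hgcont.measurable.inv.aestronglyMeasurable.stronglyMeasurableAtFilter)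
        (hginv_contAt y hy)
    have hτanti : ∀ y1 ∈ Ioo z Z, ∀ y2 ∈ Ioo z Z, y1 < y2 → τ y2 < τ y1 := by
      intro y1 h1 y2 h2 hlt
      have hadd := intervalIntegral.integral_add_adjacent_intervals
        (hIntegrable h1 h2) (hIntegrable h2 hXmem)
      have hpos : 0 < ∫ w in y1..y2, (g w)⁻¹ := by
        apply intervalIntegral.intervalIntegral_pos_of_pos_on (hIntegrable h1 h2) _ hlt
        intro x hx
        exact inv_pos.mpr (hgpos x ⟨lt_trans h1.1 hx.1, lt_trans hx.2 h2.2⟩)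
      have heq : τ y1 = (∫ w in y1..y2, (g w)⁻¹) + τ y2 := hadd.symm
      linarith
    have hτle : ∀ y1 ∈ Ioo z Z, ∀ y2 ∈ Ioo z Z, τ y1 ≤ τ y2 → y2 ≤ y1 := by
      intro y1 h1 y2 h2 hle
      by_contra h
      push_neg at h
      exact absurd hle (not_le.mpr (hτanti y1 h1 y2 h2 h))
    have hτinj : ∀ y1 ∈ Ioo z Z, ∀ y2 ∈ Ioo z Z, τ y1 = τ y2 → y1 = y2 :=
      fun y1 h1 y2 h2 heq =>
        le_antisymm (hτle y2 h2 y1 h1 heq.ge) (hτle y1 h1 y2 h2 heq.le)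
    -- divergence of τ near z
    have hdiv : ∀ s : ℝ, ∃ y ∈ Ioo z X, s ≤ τ y := by
      intro s
      set s' := max s 0 + 1 with hs'_def
      have hs'pos : 0 < s' := by
        have := le_max_right s 0; linarith
      have hs's : s ≤ s' := by
        have := le_max_left s 0; linarith
      set y := z + (X - z) * Real.exp (-(L * s')) with hy_def
      have hexp1 : Real.exp (-(L * s')) < 1 := by
        rw [Real.exp_lt_one_iff]
        nlinarith
      have hexp0 : 0 < Real.exp (-(L * s')) := Real.exp_pos _
      have hXz : 0 < X - z := by linarith
      have hyzeq : y - z = (X - z) * Real.exp (-(L * s')) := by rw [hy_def]; ring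
      have hyz : 0 < y - z := by rw [hyzeq]; positivity
      have hylt : y - z < X - z := by
        rw [hyzeq]
        nlinarith [mul_lt_mul_of_pos_left hexp1 hXz]
      have hymem : y ∈ Ioo z X := ⟨by linarith, by linarith⟩
      refine ⟨y, hymem, ?_⟩
      have hymem' : y ∈ Ioo z Z := ⟨hymem.1, hymem.2.trans hXltZ⟩
      have hint1 : IntervalIntegrable (fun w => (L * (w - z))⁻¹) volume y X := by
        apply ContinuousOn.intervalIntegrable
        intro w hw
        rw [Set.uIcc_of_le hymem.2.le] at hw
        have hwz : 0 < w - z := by linarith [hw.1]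
        exact (((continuous_const.mul (continuous_sub_right z)).continuousAt).inv₀
          (mul_pos hLpos hwz).ne').continuousWithinAt
      have hpt : ∀ x ∈ Icc y X, (L * (x - z))⁻¹ ≤ (g x)⁻¹ := by
        intro x hx
        have hxz : z < x := by linarith [hx.1]
        have hxmem : x ∈ Ioo z Z := ⟨hxz, lt_of_le_of_lt hx.2 hXltZ⟩
        exact inv_anti₀ (hgpos x hxmem) (hglin x hxz.le)
      have hle_int := intervalIntegral.integral_mono_on hymem.2.le hint1
        (hIntegrable hymem' hXmem) hpt
      have hcomp : ∫ w in y..X, (L * (w - z))⁻¹ = L⁻¹ * ∫ w in y..X, (w - z)⁻¹ := by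
        simp_rw [mul_inv]
        exact intervalIntegral.integral_const_mul _ _
      have hsub : ∫ w in y..X, (w - z)⁻¹ = ∫ w in (y - z)..(X - z), w⁻¹ :=
        intervalIntegral.integral_comp_sub_right (fun w => w⁻¹) z
      have hlog : ∫ w in (y - z)..(X - z), w⁻¹ = Real.log ((X - z) / (y - z)) :=
        integral_inv_of_pos hyz hXz
      have hratio : (X - z) / (y - z) = Real.exp (L * s') := by
        have hyz' : y - z = (X - z) * Real.exp (-(L * s')) := by rw [hy_def]; ring
        rw [hyz', div_mul_eq_div_div, div_self hXz.ne', one_div, Real.exp_neg, inv_inv]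
      have hτy : L⁻¹ * (L * s') ≤ τ y := by
        rw [← Real.log_exp (L * s'), ← hratio, ← hlog, ← hsub, ← hcomp]
        exact hle_int
      rw [inv_mul_cancel_left₀ hLpos.ne'] at hτy
      linarith
    -- midpoint above X and the inverse function η
    set ymid := (X + Z) / 2 with hymid_def
    have hymid_mem : ymid ∈ Ioo z Z := ⟨by rw [hymid_def]; linarith, by rw [hymid_def]; linarith⟩
    have hXymid : X < ymid := by
      rw [hymid_def]; linarith
    set ρ := τ ymid with hρ_def
    have hρ0 : ρ < 0 := by
      have h := hτanti X hXmem ymid hymid_mem hXymid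
      rw [hτX] at h; exact h
    have hsurj : ∀ s : ℝ, ρ ≤ s → ∃ y ∈ Ioo z Z, τ y = s := by
      intro s hs
      obtain ⟨y', hy'mem, hy'⟩ := hdiv s
      have hy'ymid : y' ≤ ymid := by linarith [hy'mem.2, hXymid]
      have hτcont : ContinuousOn τ (Icc y' ymid) := by
        intro w hw
        have hwmem : w ∈ Ioo z Z :=
          ⟨lt_of_lt_of_le hy'mem.1 hw.1, lt_of_le_of_lt hw.2 hymid_mem.2⟩
        exact (hτderiv w hwmem).continuousAt.continuousWithinAt
      have hmem : s ∈ Icc (τ ymid) (τ y') := ⟨hs, hy'⟩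
      obtain ⟨y, hy, hyval⟩ := intermediate_value_Icc' hy'ymid hτcont hmem
      exact ⟨y, ⟨lt_of_lt_of_le hy'mem.1 hy.1, lt_of_le_of_lt hy.2 hymid_mem.2⟩, hyval⟩
    have hsurj' : ∀ s : ℝ, ∃ y : ℝ, (ρ ≤ s → y ∈ Ioo z Z ∧ τ y = s) := by
      intro s
      by_cases h : ρ ≤ s
      · obtain ⟨y, hy1, hy2⟩ := hsurj s h
        exact ⟨y, fun _ => ⟨hy1, hy2⟩⟩
      · exact ⟨X, fun h' => absurd h' h⟩
    set η : ℝ → ℝ := fun s => Classical.choose (hsurj' s) with hη_def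
    have hη : ∀ s : ℝ, ρ ≤ s → η s ∈ Ioo z Z ∧ τ (η s) = s := fun s hs =>
      Classical.choose_spec (hsurj' s) hs
    have hη0 : η 0 = X := by
      obtain ⟨hm, ht⟩ := hη 0 hρ0.le
      exact hτinj _ hm _ hXmem (by rw [ht, hτX])
    -- continuity of η on [0, ∞)
    have hηcontAt : ∀ s : ℝ, 0 ≤ s → ContinuousAt η s := by
      intro s hs0
      have hsρ : ρ < s := lt_of_lt_of_le hρ0 hs0
      obtain ⟨hm, ht⟩ := hη s hsρ.le
      have hηsX : η s ≤ X := hτle _ hXmem _ hm (by rw [hτX, ht]; exact hs0)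
      rw [Metric.continuousAt_iff]
      intro δ hδ
      set δ' := min (δ / 2) (min ((η s - z) / 2) ((ymid - η s) / 2)) with hδ'_def
      have hδ'pos : 0 < δ' := by
        apply lt_min (by linarith)
        exact lt_min (by linarith [hm.1]) (by linarith [hXymid])
      have hδ'1 : δ' ≤ δ / 2 := min_le_left _ _
      have hδ'2 : δ' ≤ (η s - z) / 2 := (min_le_right _ _).trans (min_le_left _ _)
      have hδ'3 : δ' ≤ (ymid - η s) / 2 := (min_le_right _ _).trans (min_le_right _ _)
      set yl := η s - δ' with hyl_def
      set yr := η s + δ' with hyr_def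
      have hylmem : yl ∈ Ioo z Z := ⟨by simp only [hyl_def]; linarith,
        by simp only [hyl_def]; linarith [hm.2]⟩
      have hyrmem : yr ∈ Ioo z Z := ⟨by simp only [hyr_def]; linarith [hm.1],
        by simp only [hyr_def]; linarith [hymid_mem.2]⟩
      have hyrymid : yr < ymid := by simp only [hyr_def]; linarith
      have h1 : τ yr < s := by
        rw [← ht]
        exact hτanti _ hm _ hyrmem (by simp only [hyr_def]; linarith)
      have h2 : s < τ yl := by
        rw [← ht]
        exact hτanti _ hylmem _ hm (by simp only [hyl_def]; linarith)
      have hτyrρ : ρ < τ yr := hτanti _ hyrmem _ hymid_mem hyrymid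
      refine ⟨min (s - τ yr) (τ yl - s), lt_min (by linarith) (by linarith), ?_⟩
      intro u hu
      rw [Real.dist_eq] at hu
      rw [Real.dist_eq]
      have habs := abs_lt.mp hu
      have hmin1 := min_le_left (s - τ yr) (τ yl - s)
      have hmin2 := min_le_right (s - τ yr) (τ yl - s)
      have hu1 : τ yr < u := by linarith
      have hu2 : u < τ yl := by linarith
      have huρ : ρ ≤ u := by linarith
      obtain ⟨hmu, htu⟩ := hη u huρ
      have hul : η u < yr := by
        by_contra hcon
        push_neg at hcon
        rcases eq_or_lt_of_le hcon with he | hlt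
        · rw [← he] at htu; linarith
        · have := hτanti _ hyrmem _ hmu hlt
          rw [htu] at this; linarith
      have hur : yl < η u := by
        by_contra hcon
        push_neg at hcon
        rcases eq_or_lt_of_le hcon with he | hlt
        · rw [he] at htu; linarith
        · have := hτanti _ hmu _ hylmem hlt
          rw [htu] at this; linarith
      rw [abs_lt]
      constructor
      · simp only [hyl_def] at hur; linarith
      · simp only [hyr_def] at hul; linarith
    -- η solves the ODE
    have hηmem : ∀ s : ℝ, 0 ≤ s → η s ∈ Ioo z Z := fun s hs => (hη s (hρ0.le.trans hs)).1
    have hηderiv : ∀ s : ℝ, 0 ≤ s → HasDerivAt η (-(g (η s))) s := by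
      intro s hs0
      have hm := hηmem s hs0
      have hgpos' := hgpos _ hm
      have hder := HasDerivAt.of_local_left_inverse (hηcontAt s hs0)
        (hτderiv (η s) hm) (by simp [hgpos'.ne'])
        (by
          filter_upwards [isOpen_Ioi.mem_nhds (lt_of_lt_of_le hρ0 hs0)] with u hu
          exact (hη u (le_of_lt hu)).2)
      have hinv : (-(g (η s))⁻¹)⁻¹ = -(g (η s)) := by rw [inv_neg, inv_inv]
      rw [← hinv]
      exact hder
    -- end point facts
    have hηT := hηmem T hT.le
    have hηTτ := (hη T (hρ0.le.trans hT.le)).2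
    have hηTX : η T ≤ X := hτle _ hXmem _ hηT (by rw [hτX, hηTτ]; exact hT.le)
    have hηTz : z < η T := hηT.1
    -- continuity facts for the integrals
    have hcontg : ContinuousOn (fun s => g (η s)) (Icc 0 T) := fun s hs =>
      (hgcont.continuousAt.comp (hηcontAt s hs.1)).continuousWithinAt
    have hIntegr1 : IntervalIntegrable (fun s => g (η s) ^ 2) volume 0 T := by
      apply ContinuousOn.intervalIntegrable
      rw [Set.uIcc_of_le hT.le]
      exact hcontg.pow 2
    have hIntegr2 : IntervalIntegrable (fun s => Real.sqrt (2 * Vn) * g (η s)) volume 0 T := by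
      apply ContinuousOn.intervalIntegrable
      rw [Set.uIcc_of_le hT.le]
      exact continuousOn_const.mul hcontg
    have hmono := intervalIntegral.integral_mono_on hT.le hIntegr1 hIntegr2 (fun s hs => by
      have h1 := hgle (η s)
      have h2 : 0 ≤ g (η s) := Real.sqrt_nonneg _
      nlinarith)
    have hFTC : ∫ s in (0:ℝ)..T, -(g (η s)) = η T - η 0 := by
      apply intervalIntegral.integral_eq_sub_of_hasDerivAt
      · intro s hs
        rw [Set.uIcc_of_le hT.le] at hs
        exact hηderiv s hs.1
      · apply ContinuousOn.intervalIntegrable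
        rw [Set.uIcc_of_le hT.le]
        exact hcontg.neg
    have hFTC' : ∫ s in (0:ℝ)..T, g (η s) = η 0 - η T := by
      have h1 : ∫ s in (0:ℝ)..T, -(g (η s)) = -∫ s in (0:ℝ)..T, g (η s) :=
        intervalIntegral.integral_neg
      rw [h1] at hFTC
      linarith
    have hdisp : η 0 - η T ≤ 1 := by rw [hη0]; linarith
    have hIbound : ∫ s in (0:ℝ)..T, g (η s) ^ 2 ≤ Real.sqrt (2 * Vn) := by
      calc ∫ s in (0:ℝ)..T, g (η s) ^ 2
          ≤ ∫ s in (0:ℝ)..T, Real.sqrt (2 * Vn) * g (η s) := hmono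
        _ = Real.sqrt (2 * Vn) * (η 0 - η T) := by
            rw [intervalIntegral.integral_const_mul, hFTC']
        _ ≤ Real.sqrt (2 * Vn) * 1 := mul_le_mul_of_nonneg_left hdisp hsqVn
        _ = Real.sqrt (2 * Vn) := mul_one _
    have hu : u₀ (ε * η T) ≤ u₀ x₀ + Lu * ε := by
      have h1 : |u₀ (ε * η T) - u₀ x₀| ≤ Lu * |ε * η T - x₀| := hLu _ _
      have h2 : |ε * η T - x₀| = ε * |η T - X| := by
        rw [← hx₀, ← mul_sub, abs_mul, abs_of_pos hε]
      have h3 : |η T - X| ≤ 1 := abs_le.mpr ⟨by linarith, by linarith⟩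
      have h0 : u₀ (ε * η T) - u₀ x₀ ≤ Lu * (ε * |η T - X|) := by
        rw [← h2]
        exact (le_abs_self _).trans h1
      linarith [h0, mul_nonneg (mul_nonneg hLu0 hε.le) (sub_nonneg.mpr h3)]
    -- assemble
    refine ⟨η, fun s => -(g (η s)), fun s hs => hηderiv s hs.1, hη0,
      ⟨0, le_refl 0, fun s _ => by rw [neg_sq]; linarith [hgsq' (η s)]⟩, ?_⟩
    have hintval : ∫ s in (0:ℝ)..T, ((-(g (η s))) ^ 2 / 2 - a (ε * η s) * b (η s))
        = ∫ s in (0:ℝ)..T, g (η s) ^ 2 := by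
      apply intervalIntegral.integral_congr
      intro s _
      simp only [neg_sq]
      linarith [hgsq' (η s)]
    unfold actionEps
    rw [← hT_def]
    calc ε * (∫ s in (0:ℝ)..T, ((-(g (η s))) ^ 2 / 2 - a (ε * η s) * b (η s)))
          + u₀ (ε * η T)
        = ε * (∫ s in (0:ℝ)..T, g (η s) ^ 2) + u₀ (ε * η T) := by rw [hintval]
      _ ≤ ε * Real.sqrt (2 * Vn) + (u₀ x₀ + Lu * ε) := by
          have := mul_le_mul_of_nonneg_left hIbound hε.le
          linarith
      _ = u₀ x₀ + (Real.sqrt (2 * Vn) + Lu) * ε := by ring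

/-- Estimate for the infimum of the action over Euler–Lagrange trajectories of
nonpositive energy: it differs from `u₀(x₀)` by at most
`(√(2‖V‖_∞) + Lip(u₀))·ε`. -/
theorem nonpositive_energy_estimate
    (a b : ℝ → ℝ)
    (ha : ContDiff ℝ 1 a) (haBd : ∃ M : ℝ, ∀ x, |a x| ≤ M)
    (haPos : ∀ x, 0 < a x)
    (hb : ContDiff ℝ 2 b) (hbPer : Function.Periodic b 1)
    (hbNonpos : ∀ y, b y ≤ 0) (hbMax : ∃ y₀, b y₀ = 0)
    (u₀ : ℝ → ℝ) (hu₀Bd : ∃ M : ℝ, ∀ x, |u₀ x| ≤ M)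
    (Lu : ℝ) (hLu : ∀ x y, |u₀ x - u₀ y| ≤ Lu * |x - y|)
    (Vn : ℝ) (hVn : Vn = ⨆ q : ℝ × ℝ, |a q.1 * b q.2|)
    (ε x₀ t₀ : ℝ) (hε : ε ∈ Set.Ioo (0 : ℝ) 1) (ht₀ : 0 < t₀) :
    |sInf {A : ℝ | ∃ η η' : ℝ → ℝ,
        (∀ s ∈ Set.Icc (0 : ℝ) (t₀ / ε), HasDerivAt η (η' s) s) ∧
        η 0 = x₀ / ε ∧
        (∃ r : ℝ, r ≤ 0 ∧ ∀ s ∈ Set.Icc (0 : ℝ) (t₀ / ε),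
          (η' s) ^ 2 / 2 + a (ε * η s) * b (η s) = r) ∧
        A = actionEps (fun x y => a x * b y) u₀ ε t₀ η η'}
      - u₀ x₀| ≤ (Real.sqrt (2 * Vn) + Lu) * ε := by
  obtain ⟨hε0, hε1⟩ := hε
  obtain ⟨y₀, hy₀⟩ := hbMax
  -- basic constants
  obtain ⟨M, hM⟩ := haBd
  have haM : ∀ x, a x ≤ M := fun x => (le_abs_self _).trans (hM x)
  have haCont : Continuous a := ha.continuous
  have hbCont : Continuous b := hb.continuous
  have hbd1 : Differentiable ℝ b := hb.differentiable (by norm_num)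
  -- second derivative bound and Lipschitz first derivative
  have hb2 : ContDiff ℝ (1 + 1) b := by norm_num; exact hb
  have hbd' : ContDiff ℝ 1 (deriv b) := (contDiff_succ_iff_deriv.mp hb2).2.2
  have hb''cont : Continuous (deriv (deriv b)) := hbd'.continuous_deriv le_rfl
  have hb''per : Function.Periodic (deriv (deriv b)) 1 :=
    periodic_deriv' (periodic_deriv' hbPer)
  obtain ⟨K, hK0, hKb⟩ := periodic_bdd hb''cont hb''per
  have hlip : ∀ u v : ℝ, |deriv b u - deriv b v| ≤ K * |u - v| := by
    have hl : LipschitzWith K.toNNReal (deriv b) := by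
      apply lipschitzWith_of_nnnorm_deriv_le (hbd'.differentiable one_ne_zero)
      intro x
      rw [← NNReal.coe_le_coe, coe_nnnorm, Real.norm_eq_abs, Real.coe_toNNReal _ hK0]
      exact hKb x
    intro u v
    have := hl.dist_le_mul u v
    rwa [Real.dist_eq, Real.dist_eq, Real.coe_toNNReal _ hK0] at this
  have hquad : ∀ z' : ℝ, b z' = 0 → ∀ y, -b y ≤ K * (y - z') ^ 2 :=
    fun z' hz' => quad_bound hbd1 hlip hbNonpos hz'
  -- Vn bound
  obtain ⟨B, hB0, hBb⟩ := periodic_bdd hbCont hbPer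
  have hbddF : BddAbove (Set.range fun q : ℝ × ℝ => |a q.1 * b q.2|) := by
    refine ⟨M * B, ?_⟩
    rintro _ ⟨q, rfl⟩
    show |a q.1 * b q.2| ≤ M * B
    rw [abs_mul]
    exact mul_le_mul (hM q.1) (hBb q.2) (abs_nonneg _) ((abs_nonneg (a q.1)).trans (hM q.1))
  have hVnle : ∀ x y, a x * (-b y) ≤ Vn := by
    intro x y
    have h1 : a x * (-b y) = |a x * b y| := by
      rw [abs_mul, abs_of_pos (haPos x), abs_of_nonpos (hbNonpos y)]
    rw [h1, hVn]
    exact le_ciSup hbddF (x, y)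
  have hLu0 : 0 ≤ Lu := le_trans (abs_nonneg _) (by simpa using hLu 0 1)
  have hsqVn : 0 ≤ Real.sqrt (2 * Vn) := Real.sqrt_nonneg _
  -- the set
  set S : Set ℝ := {A : ℝ | ∃ η η' : ℝ → ℝ,
        (∀ s ∈ Set.Icc (0 : ℝ) (t₀ / ε), HasDerivAt η (η' s) s) ∧
        η 0 = x₀ / ε ∧
        (∃ r : ℝ, r ≤ 0 ∧ ∀ s ∈ Set.Icc (0 : ℝ) (t₀ / ε),
          (η' s) ^ 2 / 2 + a (ε * η s) * b (η s) = r) ∧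
        A = actionEps (fun x y => a x * b y) u₀ ε t₀ η η'} with hS_def
  have hlow : ∀ A ∈ S, u₀ x₀ - Lu * ε ≤ A := by
    rintro A ⟨η, η', hd, h0, ⟨r, hr, hE⟩, rfl⟩
    exact lower_est a b haPos haM hK0 hquad hbCont hbNonpos hy₀ hbPer u₀ Lu hLu hε0 ht₀
      hd h0 hr hE
  obtain ⟨η, η', hd, h0, hEn, hAle⟩ := upper_est a b haCont haPos haM hK0 hquad hbCont
    hbNonpos hy₀ hbPer u₀ Lu hLu hVnle hε0 ht₀
  have hmem : actionEps (fun x y => a x * b y) u₀ ε t₀ η η' ∈ S :=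
    ⟨η, η', hd, h0, hEn, rfl⟩
  have hSne : S.Nonempty := ⟨_, hmem⟩
  have hSbdd : BddBelow S := ⟨u₀ x₀ - Lu * ε, hlow⟩
  have h1 : sInf S ≤ actionEps (fun x y => a x * b y) u₀ ε t₀ η η' := csInf_le hSbdd hmem
  have h2 : u₀ x₀ - Lu * ε ≤ sInf S := le_csInf hSne hlow
  rw [abs_le]
  constructor
  · nlinarith [mul_nonneg hsqVn hε0.le]
  · linarith
end

section
/- Assume the setting of the separable potential with R, T, r₀ fixed. Fix (x₀, t₀) ∈ [−R,R] × (0,T], ε ∈ (0,1), and 0 < r < r₀. Let η : [0, t₀/ε] → ℝ be differentiable with η(0) = x₀/ε and η′(s) = √(2(r − V(εη(s), η(s)))) for all s ∈ (0, t₀/ε), and let c_{1,r} be the unique number ≥ x₀ with ∫_{x₀}^{c_{1,r}} ∫₀¹ dy dx / √(2(r − V(x,y))) = t₀. Then |ε·η(t₀/ε) − c_{1,r}| ≤ C_K·ε, where C_K = √(β_T/α_T)·( 2 + (c₀/2)·max_{x∈I₀} |a′(x)/a(x)| ). -/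
set_option maxHeartbeats 2000000

open intervalIntegral MeasureTheory Set

lemma periodic_avg_bound {f : ℝ → ℝ} (hf : Continuous f) (hper : Function.Periodic f 1)
    {s t : ℝ} (hst : s ≤ t) :
    |(∫ x in s..t, f x) - (t - s) * ∫ x in (0:ℝ)..1, f x| ≤ ∫ x in (0:ℝ)..1, |f x| := by
  have hint : ∀ t₁ t₂ : ℝ, IntervalIntegrable f volume t₁ t₂ := fun t₁ t₂ =>
    hf.intervalIntegrable t₁ t₂
  have hintabs : ∀ t₁ t₂ : ℝ, IntervalIntegrable (fun x => |f x|) volume t₁ t₂ := fun t₁ t₂ =>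
    (hf.abs).intervalIntegrable t₁ t₂
  have hperabs : Function.Periodic (fun x => |f x|) 1 := fun x => by simp [hper x]
  set A : ℝ := ∫ x in (0:ℝ)..1, f x with hA
  set n : ℤ := ⌊t - s⌋ with hn
  have hn0 : (0:ℤ) ≤ n := Int.le_floor.2 (by simpa using sub_nonneg.2 hst)
  set s' : ℝ := s + n with hs'
  have hρ0 : s' ≤ t := by
    have := Int.floor_le (t - s)
    simp only [hs', hn]; linarith
  have hρ1 : t ≤ s' + 1 := by
    have := Int.lt_floor_add_one (t - s)
    simp only [hs', hn]; linarith
  -- integral over [s, s'] is n • A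
  have h1 : (∫ x in s..s', f x) = (n : ℝ) * A := by
    have := hper.intervalIntegral_add_zsmul_eq n s hint
    have h2 : (∫ x in s..s+1, f x) = A := by
      simpa using hper.intervalIntegral_add_eq s 0
    rw [show s + n • (1:ℝ) = s' by simp [hs']] at this
    rw [this, h2, zsmul_eq_mul]
  have h3 : (∫ x in s..t, f x) = (n:ℝ) * A + ∫ x in s'..t, f x := by
    rw [← h1]; exact (integral_add_adjacent_intervals (hint s s') (hint s' t)).symm
  -- A as integral over the window [s', s'+1]
  have h4 : A = (∫ x in s'..t, f x) + ∫ x in t..s'+1, f x := by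
    rw [integral_add_adjacent_intervals (hint s' t) (hint t (s'+1))]
    simpa using (hper.intervalIntegral_add_eq s' 0).symm
  set ρ : ℝ := t - s' with hρ
  have hts : t - s = (n : ℝ) + ρ := by simp [hρ, hs']; ring
  have habs : ∀ u v : ℝ, u ≤ v → |∫ x in u..v, f x| ≤ ∫ x in u..v, |f x| := by
    intro u v huv
    exact (intervalIntegral.abs_integral_le_integral_abs huv)
  have hP := habs s' t hρ0
  have hQ := habs t (s'+1) hρ1
  have hPQ : (∫ x in s'..t, |f x|) + (∫ x in t..s'+1, |f x|) = ∫ x in (0:ℝ)..1, |f x| := by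
    rw [integral_add_adjacent_intervals (hintabs s' t) (hintabs t (s'+1))]
    simpa using (hperabs.intervalIntegral_add_eq s' 0)
  have hρmem : 0 ≤ ρ ∧ ρ ≤ 1 := ⟨by linarith, by linarith⟩
  have key : |(∫ x in s'..t, f x) - ρ * A| ≤ ∫ x in (0:ℝ)..1, |f x| := by
    have : (∫ x in s'..t, f x) - ρ * A
        = (1 - ρ) * (∫ x in s'..t, f x) - ρ * (∫ x in t..s'+1, f x) := by
      rw [h4]; ring
    rw [this]
    have h5 : |(1 - ρ) * (∫ x in s'..t, f x) - ρ * (∫ x in t..s'+1, f x)|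
        ≤ (1-ρ) * |∫ x in s'..t, f x| + ρ * |∫ x in t..s'+1, f x| := by
      refine (abs_sub _ _).trans ?_
      rw [abs_mul, abs_mul, abs_of_nonneg (by linarith : (0:ℝ) ≤ 1 - ρ),
        abs_of_nonneg hρmem.1]
    refine h5.trans ?_
    have hPnn : 0 ≤ ∫ x in s'..t, |f x| := intervalIntegral.integral_nonneg hρ0 (fun _ _ => abs_nonneg _)
    have hQnn : 0 ≤ ∫ x in t..s'+1, |f x| := intervalIntegral.integral_nonneg hρ1 (fun _ _ => abs_nonneg _)
    calc (1-ρ) * |∫ x in s'..t, f x| + ρ * |∫ x in t..s'+1, f x|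
        ≤ (1-ρ) * (∫ x in s'..t, |f x|) + ρ * (∫ x in t..s'+1, |f x|) := by
          exact add_le_add (mul_le_mul_of_nonneg_left hP (by linarith [hρmem.2])) (mul_le_mul_of_nonneg_left hQ hρmem.1)
      _ ≤ (∫ x in s'..t, |f x|) + (∫ x in t..s'+1, |f x|) := by nlinarith
      _ = _ := hPQ
  calc |(∫ x in s..t, f x) - (t - s) * A|
      = |(∫ x in s'..t, f x) - ρ * A| := by rw [h3, hts]; ring_nf
    _ ≤ _ := key


lemma triangle_swap {g : ℝ → ℝ → ℝ} {a b : ℝ} (hab : a ≤ b)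
    (hmeas : Measurable (Function.uncurry g))
    (C : ℝ) (hbd : ∀ u x, |g u x| ≤ C) :
    ∫ x in a..b, (∫ u in a..x, g u x) = ∫ u in a..b, (∫ x in u..b, g u x) := by
  set μ : Measure ℝ := volume.restrict (Ioc a b) with hμ
  haveI : IsFiniteMeasure μ := ⟨by
    rw [hμ, Measure.restrict_apply_univ]; exact measure_Ioc_lt_top⟩
  set f : ℝ → ℝ → ℝ := fun x u => if u ≤ x then g u x else 0 with hf
  have hK : Measurable (Function.uncurry f) := by
    apply Measurable.ite (measurableSet_le measurable_snd measurable_fst)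
    · exact hmeas.comp (measurable_snd.prodMk measurable_fst)
    · exact measurable_const
  have hInt : Integrable (Function.uncurry f) (μ.prod μ) := by
    refine (integrable_const C).mono' hK.aestronglyMeasurable ?_
    filter_upwards with p
    simp only [Function.uncurry, hf, Real.norm_eq_abs]
    split
    · exact hbd _ _
    · simp [le_trans (abs_nonneg (g 0 0)) (hbd 0 0)]
  have swap := integral_integral_swap hInt
  have hL : (∫ x in a..b, (∫ u in a..x, g u x)) = ∫ x, (∫ u, f x u ∂μ) ∂μ := by
    rw [intervalIntegral.integral_of_le hab]
    refine setIntegral_congr_ae measurableSet_Ioc ?_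
    filter_upwards with x hxmem
    have h1 : (fun u => f x u) = Set.indicator (Set.Iic x) (fun u => g u x) := by
      funext u; simp [hf, Set.indicator_apply, Set.mem_Iic]
    rw [h1, MeasureTheory.integral_indicator measurableSet_Iic, hμ,
      Measure.restrict_restrict measurableSet_Iic]
    have h2 : Set.Iic x ∩ Set.Ioc a b = Set.Ioc a x := by
      ext u; simp only [Set.mem_inter_iff, Set.mem_Iic, Set.mem_Ioc]
      exact ⟨fun ⟨h1', h2', _⟩ => ⟨h2', h1'⟩, fun ⟨h1', h2'⟩ => ⟨h2', h1', h2'.trans hxmem.2⟩⟩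
    rw [h2, intervalIntegral.integral_of_le hxmem.1.le]
  have hR : (∫ u in a..b, (∫ x in u..b, g u x)) = ∫ u, (∫ x, f x u ∂μ) ∂μ := by
    rw [intervalIntegral.integral_of_le hab]
    refine setIntegral_congr_ae measurableSet_Ioc ?_
    filter_upwards with u humem
    have h1 : (fun x => f x u) = Set.indicator (Set.Ici u) (fun x => g u x) := by
      funext x; simp [hf, Set.indicator_apply, Set.mem_Ici]
    rw [h1, MeasureTheory.integral_indicator measurableSet_Ici, hμ,
      Measure.restrict_restrict measurableSet_Ici]
    have h2 : Set.Ici u ∩ Set.Ioc a b = Set.Icc u b := by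
      ext x; simp only [Set.mem_inter_iff, Set.mem_Ici, Set.mem_Ioc, Set.mem_Icc]
      exact ⟨fun ⟨h1', _, h3'⟩ => ⟨h1', h3'⟩, fun ⟨h1', h2'⟩ => ⟨h1', humem.1.trans_le h1', h2'⟩⟩
    rw [h2, integral_Icc_eq_integral_Ioc, intervalIntegral.integral_of_le humem.2]
  rw [hL, hR]; exact swap


lemma hasDerivAt_sqrtinv (a b : ℝ → ℝ) (haDiff : Differentiable ℝ a) (r : ℝ)
    (hvpos : ∀ x y, 0 < 2 * (r - a x * b y)) (y x : ℝ) :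
    HasDerivAt (fun x' => (Real.sqrt (2 * (r - a x' * b y)))⁻¹)
      (deriv a x * b y / (Real.sqrt (2 * (r - a x * b y)))^3) x := by
  have hspos : 0 < Real.sqrt (2 * (r - a x * b y)) := Real.sqrt_pos.2 (hvpos x y)
  have h1 : HasDerivAt (fun x' => 2 * (r - a x' * b y)) (2 * (0 - deriv a x * b y)) x :=
    (((hasDerivAt_const x r).sub (((haDiff x).hasDerivAt).mul_const (b y))).const_mul 2)
  have h2 := (Real.hasDerivAt_sqrt (hvpos x y).ne').comp x h1
  simp only [Function.comp_def] at h2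
  have h3 := h2.inv hspos.ne'
  refine h3.congr_deriv ?_
  field_simp
  ring

/-- Positive-energy trajectories end, after rescaling, within `C_K·ε` of the
point `c_{1,r}` determined by the averaged travel-time identity. -/
theorem endpoint_close_to_average
    (a b : ℝ → ℝ)
    (ha : ContDiff ℝ 1 a) (haBd : ∃ M : ℝ, ∀ x, |a x| ≤ M)
    (haPos : ∀ x, 0 < a x)
    (hb : Continuous b) (hbPer : Function.Periodic b 1)
    (hbNonpos : ∀ y, b y ≤ 0) (hbMax : ∃ y₀, b y₀ = 0)
    (R T r₀ : ℝ) (hR : 0 < R) (hT : 0 < T) (hr₀ : 0 < r₀)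
    (Vn : ℝ) (hVn : Vn = ⨆ q : ℝ × ℝ, |a q.1 * b q.2|)
    (c₀ : ℝ) (hc₀ : c₀ = T * Real.sqrt (2 * (r₀ + Vn)))
    (αT : ℝ) (hαT : αT = sInf (a '' Set.Icc (-R) (R + c₀)))
    (βT : ℝ) (hβT : βT = sSup (a '' Set.Icc (-R) (R + c₀)))
    (CK : ℝ) (hCK : CK = Real.sqrt (βT / αT) *
      (2 + c₀ / 2 * sSup ((fun x => |deriv a x / a x|) '' Set.Icc (-R) (R + c₀))))
    (x₀ t₀ : ℝ) (hx₀ : x₀ ∈ Set.Icc (-R) R) (ht₀ : t₀ ∈ Set.Ioc (0 : ℝ) T)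
    (ε : ℝ) (hε : ε ∈ Set.Ioo (0 : ℝ) 1)
    (r : ℝ) (hr : 0 < r) (hrr₀ : r < r₀)
    (η : ℝ → ℝ) (hη0 : η 0 = x₀ / ε)
    (hηd : ∀ s ∈ Set.Icc (0 : ℝ) (t₀ / ε),
      HasDerivAt η (Real.sqrt (2 * (r - a (ε * η s) * b (η s)))) s)
    (c₁ : ℝ) (hc₁ : x₀ ≤ c₁)
    (hc₁t : (∫ x in x₀..c₁, ∫ y in (0 : ℝ)..1,
      (Real.sqrt (2 * (r - a x * b y)))⁻¹) = t₀) :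
    |ε * η (t₀ / ε) - c₁| ≤ CK * ε := by
  obtain ⟨hε0, hε1⟩ := hε
  obtain ⟨ht₀0, ht₀T⟩ := ht₀
  obtain ⟨hx₀l, hx₀r⟩ := hx₀
  obtain ⟨M, hMa⟩ := haBd
  have haCont : Continuous a := ha.continuous
  have haDiff : Differentiable ℝ a := ha.differentiable one_ne_zero
  have ha'cont : Continuous (deriv a) := ha.continuous_deriv le_rfl
  -- b is bounded
  obtain ⟨B, hB01⟩ := (isCompact_Icc (a := (0:ℝ)) (b := 1)).exists_bound_of_continuousOn
    hb.continuousOn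
  have hBb : ∀ y, |b y| ≤ B := by
    intro y
    have h1 : b y = b (Int.fract y) := by
      have h2 := hbPer.sub_int_mul_eq (x := y) (n := ⌊y⌋)
      rw [mul_one] at h2
      rw [Int.fract]
      exact h2.symm
    rw [h1]
    simpa using hB01 (Int.fract y) ⟨Int.fract_nonneg y, (Int.fract_lt_one y).le⟩
  -- Vn facts
  have hVnb : ∀ x y, |a x * b y| ≤ Vn := by
    intro x y
    rw [hVn]
    refine le_ciSup (f := fun q : ℝ × ℝ => |a q.1 * b q.2|) ?_ (x, y)
    refine ⟨M * B, ?_⟩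
    rintro _ ⟨q, rfl⟩
    show |a q.1 * b q.2| ≤ M * B
    rw [abs_mul]
    have h0b : 0 ≤ B := (abs_nonneg _).trans (hBb 0)
    exact mul_le_mul (hMa q.1) (hBb q.2) (abs_nonneg _) ((abs_nonneg _).trans (hMa 0))
  have hVn0 : 0 ≤ Vn := (abs_nonneg _).trans (hVnb 0 0)
  have habnp : ∀ x y, a x * b y ≤ 0 := fun x y =>
    mul_nonpos_iff.2 (Or.inl ⟨(haPos x).le, hbNonpos y⟩)
  have hvlo : ∀ x y, r ≤ r - a x * b y := fun x y => by nlinarith [habnp x y]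
  have hvhi : ∀ x y, r - a x * b y ≤ r + Vn := by
    intro x y
    have h1 := hVnb x y
    rw [abs_of_nonpos (habnp x y)] at h1
    linarith
  have hvpos : ∀ x y, 0 < 2 * (r - a x * b y) := fun x y => by nlinarith [hvlo x y]
  have hspos : ∀ x y, 0 < Real.sqrt (2 * (r - a x * b y)) :=
    fun x y => Real.sqrt_pos.2 (hvpos x y)
  have h2rpos : (0:ℝ) < Real.sqrt (2 * r) := Real.sqrt_pos.2 (by linarith)
  have h2rVpos : (0:ℝ) < Real.sqrt (2 * (r + Vn)) := Real.sqrt_pos.2 (by linarith)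
  have hc₀pos : 0 < c₀ := by
    rw [hc₀]
    exact mul_pos hT (Real.sqrt_pos.2 (by linarith))
  set I₀ : Set ℝ := Set.Icc (-R) (R + c₀) with hI₀def
  have hI₀ne : I₀.Nonempty := Set.nonempty_Icc.2 (by linarith)
  -- αT, βT, Sg
  obtain ⟨xm, hxmI, hxmin⟩ := isCompact_Icc.exists_isMinOn hI₀ne haCont.continuousOn
  have hαval : αT = a xm := by
    rw [hαT]
    refine le_antisymm (csInf_le (isCompact_Icc.image haCont).bddBelow ⟨xm, hxmI, rfl⟩) ?_
    refine le_csInf (hI₀ne.image _) ?_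
    rintro _ ⟨z, hz, rfl⟩
    exact hxmin hz
  have hα0 : 0 < αT := hαval ▸ haPos xm
  have hαle : ∀ x ∈ I₀, αT ≤ a x := fun x hx => hαval ▸ hxmin hx
  have hβge : ∀ x ∈ I₀, a x ≤ βT := fun x hx => by
    rw [hβT]; exact le_csSup (isCompact_Icc.image haCont).bddAbove ⟨x, hx, rfl⟩
  have hαβ : αT ≤ βT := le_trans (hαle xm hxmI) (hβge xm hxmI)
  have hβ0 : 0 < βT := lt_of_lt_of_le hα0 hαβ
  set Sg : ℝ := sSup ((fun x => |deriv a x / a x|) '' I₀) with hSgdef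
  clear_value Sg
  have hφcont : ContinuousOn (fun x => |deriv a x / a x|) I₀ :=
    ((ha'cont.continuousOn.div haCont.continuousOn (fun x _ => (haPos x).ne')).abs)
  have hSle : ∀ x ∈ I₀, |deriv a x / a x| ≤ Sg := fun x hx => by
    rw [hSgdef]
    exact le_csSup (isCompact_Icc.image_of_continuousOn hφcont).bddAbove ⟨x, hx, rfl⟩
  have hS0 : 0 ≤ Sg := (abs_nonneg _).trans (hSle (-R) ⟨le_rfl, by linarith⟩)
  have hSa : ∀ x ∈ I₀, |deriv a x| ≤ Sg * a x := by
    intro x hx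
    have h1 := hSle x hx
    rw [abs_div, abs_of_pos (haPos x), div_le_iff₀ (haPos x)] at h1
    linarith
  -- the functions F, dF, G, G'
  set F : ℝ → ℝ → ℝ := fun x y => (Real.sqrt (2 * (r - a x * b y)))⁻¹ with hFdef
  set dF : ℝ → ℝ → ℝ :=
    fun x y => deriv a x * b y / (Real.sqrt (2 * (r - a x * b y)))^3 with hdFdef
  clear_value F dF
  have hFpos : ∀ x y, 0 < F x y := fun x y => by
    simp only [hFdef]; exact inv_pos.2 (hspos x y)
  have hFcont2 : Continuous (fun p : ℝ × ℝ => F p.1 p.2) := by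
    simp only [hFdef]
    apply Continuous.inv₀
    · exact (Real.continuous_sqrt.comp (by fun_prop))
    · exact fun p => (hspos p.1 p.2).ne'
  have hdFcont2 : Continuous (fun p : ℝ × ℝ => dF p.1 p.2) := by
    simp only [hdFdef]
    apply Continuous.div
    · fun_prop
    · exact ((Real.continuous_sqrt.comp (by fun_prop)).pow 3)
    · exact fun p => pow_ne_zero 3 (hspos p.1 p.2).ne'
  have hFcontx : ∀ x, Continuous (F x) := fun x =>
    hFcont2.comp (continuous_const.prodMk continuous_id)
  have hdFcontx : ∀ x, Continuous (dF x) := fun x =>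
    hdFcont2.comp (continuous_const.prodMk continuous_id)
  have hFconty : ∀ y, Continuous (fun x => F x y) := fun y =>
    hFcont2.comp (continuous_id.prodMk continuous_const)
  have hFle : ∀ x y, F x y ≤ (Real.sqrt (2*r))⁻¹ := by
    intro x y
    simp only [hFdef]
    apply inv_anti₀ h2rpos
    exact Real.sqrt_le_sqrt (by nlinarith [hvlo x y])
  have hFge : ∀ x y, (Real.sqrt (2*(r+Vn)))⁻¹ ≤ F x y := by
    intro x y
    simp only [hFdef]
    apply inv_anti₀ (hspos x y)
    exact Real.sqrt_le_sqrt (by nlinarith [hvhi x y])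
  have hFper : ∀ x, Function.Periodic (F x) 1 := fun x y => by simp [hFdef, hbPer y]
  have hdFper : ∀ x, Function.Periodic (dF x) 1 := fun x y => by simp [hdFdef, hbPer y]
  -- derivative of F in its first variable
  have hdF : ∀ y x, HasDerivAt (fun x' => F x' y) (dF x y) x := by
    intro y x
    simp only [hFdef, hdFdef]
    exact hasDerivAt_sqrtinv a b haDiff r hvpos y x
  -- bound on dF
  have hdFbd : ∀ x ∈ I₀, ∀ y, |dF x y| ≤ Sg/2 * F x y := by
    intro x hx y
    simp only [hFdef, hdFdef]
    have hs := hspos x y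
    have hs2 : Real.sqrt (2*(r - a x * b y)) ^ 2 = 2*(r - a x * b y) :=
      Real.sq_sqrt (hvpos x y).le
    have h1 : |deriv a x * b y / Real.sqrt (2 * (r - a x * b y)) ^ 3|
        = |deriv a x| * |b y| / Real.sqrt (2 * (r - a x * b y)) ^ 3 := by
      rw [abs_div, abs_mul, abs_of_nonneg (pow_nonneg (Real.sqrt_nonneg _) 3)]
    rw [h1, div_le_iff₀ (pow_pos hs 3)]
    have h2 : Sg/2 * (Real.sqrt (2*(r - a x * b y)))⁻¹ * Real.sqrt (2*(r - a x * b y)) ^ 3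
        = Sg * (r - a x * b y) := by
      have h2' : Real.sqrt (2*(r - a x * b y)) ^ 3
          = Real.sqrt (2*(r - a x * b y)) * Real.sqrt (2*(r - a x * b y))^2 := by ring
      rw [h2', hs2]
      have h2'' : Sg/2 * (Real.sqrt (2*(r - a x * b y)))⁻¹
            * (Real.sqrt (2*(r - a x * b y)) * (2*(r - a x * b y)))
          = Sg * (r - a x * b y)
            * ((Real.sqrt (2*(r - a x * b y)))⁻¹ * Real.sqrt (2*(r - a x * b y))) := by
        ring
      rw [h2'', inv_mul_cancel₀ hs.ne', mul_one]
    rw [h2]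
    have h3 : |deriv a x| * |b y| ≤ Sg * a x * |b y| :=
      mul_le_mul_of_nonneg_right (hSa x hx) (abs_nonneg _)
    have h4 : a x * |b y| = -(a x * b y) := by
      rw [abs_of_nonpos (hbNonpos y)]; ring
    have h5 : Sg * a x * |b y| = -(Sg * (a x * b y)) := by rw [mul_assoc, h4]; ring
    have h6 : Sg * (r - a x * b y) = Sg * r - Sg * (a x * b y) := by ring
    have h7 : 0 ≤ Sg * r := mul_nonneg hS0 hr.le
    linarith
  set G : ℝ → ℝ := fun x => ∫ y in (0:ℝ)..1, F x y with hGdef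
  set G' : ℝ → ℝ := fun x => ∫ y in (0:ℝ)..1, dF x y with hG'def
  clear_value G G'
  have hGderiv : ∀ x, HasDerivAt G (G' x) x := by
    intro x
    obtain ⟨Ax, hAx⟩ := (isCompact_Icc (a := x - 1) (b := x + 1)).exists_bound_of_continuousOn
      (ha'cont.continuousOn)
    have hbound : ∀ᵐ (y : ℝ) ∂volume, y ∈ Set.uIoc (0:ℝ) 1 →
        ∀ x' ∈ Metric.ball x 1, ‖dF x' y‖ ≤ |Ax| * B * ((Real.sqrt (2*r))^3)⁻¹ := by
      refine Filter.Eventually.of_forall (fun y _ x' hx' => ?_)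
      have hx'' : x' ∈ Set.Icc (x-1) (x+1) := by
        have h0 := abs_lt.1 (by simpa [Real.dist_eq] using (Metric.mem_ball.1 hx'))
        constructor <;> linarith [h0.1, h0.2]
      have h1 : |deriv a x'| ≤ |Ax| := le_trans (by simpa using hAx x' hx'') (le_abs_self _)
      have hs' := hspos x' y
      have h2 : Real.sqrt (2*r) ≤ Real.sqrt (2*(r - a x' * b y)) :=
        Real.sqrt_le_sqrt (by nlinarith [hvlo x' y])
      have h3 : |dF x' y| = |deriv a x'| * |b y| / Real.sqrt (2*(r - a x' * b y)) ^ 3 := by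
        rw [hdFdef, abs_div, abs_mul, abs_of_nonneg (pow_nonneg (Real.sqrt_nonneg _) 3)]
      rw [Real.norm_eq_abs, h3, ← div_eq_mul_inv]
      refine div_le_div₀ (mul_nonneg (abs_nonneg _) ((abs_nonneg _).trans (hBb 0)))
        (mul_le_mul h1 (hBb y) (abs_nonneg _) (abs_nonneg _)) (pow_pos h2rpos 3) ?_
      exact pow_le_pow_left₀ h2rpos.le h2 3
    have key := intervalIntegral.hasDerivAt_integral_of_dominated_loc_of_deriv_le
      (F := fun x y => F x y) (F' := fun x y => dF x y) (a := (0:ℝ)) (b := 1)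
      (bound := fun _ => |Ax| * B * ((Real.sqrt (2*r))^3)⁻¹) (Metric.ball_mem_nhds x zero_lt_one)
      (Filter.Eventually.of_forall fun x' => ((hFcontx x').aestronglyMeasurable).restrict)
      ((hFcontx x).intervalIntegrable _ _)
      ((hdFcontx x).aestronglyMeasurable.restrict)
      hbound intervalIntegrable_const
      (Filter.Eventually.of_forall fun y _ x' _ => hdF y x')
    rw [hGdef, hG'def]
    exact key.2
  have hGcont : Continuous G := by
    rw [continuous_iff_continuousAt]; exact fun x => (hGderiv x).continuousAt
  have hGle : ∀ x, G x ≤ (Real.sqrt (2*r))⁻¹ := by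
    intro x
    have h1 : (∫ y in (0:ℝ)..1, F x y) ≤ ∫ y in (0:ℝ)..1, (Real.sqrt (2*r))⁻¹ :=
      intervalIntegral.integral_mono_on zero_le_one ((hFcontx x).intervalIntegrable _ _)
        (intervalIntegrable_const) (fun y _ => hFle x y)
    simpa [hGdef] using h1
  have hGge : ∀ x, (Real.sqrt (2*(r+Vn)))⁻¹ ≤ G x := by
    intro x
    have h1 : (∫ y in (0:ℝ)..1, (Real.sqrt (2*(r+Vn)))⁻¹) ≤ ∫ y in (0:ℝ)..1, F x y :=
      intervalIntegral.integral_mono_on zero_le_one (intervalIntegrable_const)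
        ((hFcontx x).intervalIntegrable _ _) (fun y _ => hFge x y)
    simpa [hGdef] using h1
  have hGpos : ∀ x, 0 < G x := fun x => lt_of_lt_of_le (inv_pos.2 h2rVpos) (hGge x)
  -- κ-comparison
  set κ : ℝ := Real.sqrt (βT/αT) with hκdef
  clear_value κ
  have hκ1 : 1 ≤ κ := by
    rw [hκdef, show (1:ℝ) = Real.sqrt 1 by simp]
    exact Real.sqrt_le_sqrt ((le_div_iff₀ hα0).2 (by linarith))
  have hκ0 : 0 < κ := lt_of_lt_of_le one_pos hκ1
  have hFκ : ∀ x ∈ I₀, ∀ w ∈ I₀, ∀ y, F x y ≤ κ * F w y := by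
    intro x hx w hw y
    simp only [hFdef]
    have hbb := hbNonpos y
    have hax := hαle x hx
    have haw := hβge w hw
    have hsx := hspos x y
    have hsw := hspos w y
    have key : 2*(r - a w * b y) ≤ (βT/αT) * (2*(r - a x * b y)) := by
      rw [div_mul_eq_mul_div, le_div_iff₀ hα0]
      have e1 : αT * a w ≤ a x * βT := by nlinarith [(haPos w).le, (haPos x).le]
      nlinarith [mul_le_mul_of_nonneg_right e1 (neg_nonneg.2 hbb)]
    have h5 : Real.sqrt (2*(r - a w * b y)) ≤ κ * Real.sqrt (2*(r - a x * b y)) := by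
      rw [hκdef, ← Real.sqrt_mul (div_nonneg hβ0.le hα0.le)]
      exact Real.sqrt_le_sqrt key
    have h7 : Real.sqrt (2*(r - a w * b y)) / κ ≤ Real.sqrt (2*(r - a x * b y)) :=
      (div_le_iff₀ hκ0).2 (h5.trans_eq (mul_comm _ _))
    have h8 := inv_anti₀ (div_pos hsw hκ0) h7
    rw [inv_div, div_eq_mul_inv] at h8
    exact h8
  have hGκ : ∀ x ∈ I₀, ∀ w ∈ I₀, G x ≤ κ * G w := by
    intro x hx w hw
    have h1 : (∫ y in (0:ℝ)..1, F x y) ≤ ∫ y in (0:ℝ)..1, κ * F w y :=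
      intervalIntegral.integral_mono_on zero_le_one ((hFcontx x).intervalIntegrable _ _)
        ((continuous_const.mul (hFcontx w)).intervalIntegrable _ _) (fun y _ => hFκ x hx w hw y)
    simpa [hGdef, intervalIntegral.integral_const_mul] using h1
  -- the trajectory endpoint
  set X : ℝ := ε * η (t₀ / ε) with hXdef
  clear_value X
  have hτpos : 0 < t₀ / ε := div_pos ht₀0 hε0
  have huIcc : Set.uIcc (0:ℝ) (t₀/ε) = Set.Icc 0 (t₀/ε) := Set.uIcc_of_le hτpos.le
  have hηcont : ContinuousOn η (Set.Icc 0 (t₀/ε)) :=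
    fun s hs => ((hηd s hs).continuousAt).continuousWithinAt
  have hQcont : Continuous (fun u => F (ε*u) u) :=
    hFcont2.comp ((continuous_const.mul continuous_id).prodMk continuous_id)
  have hgc : Continuous (fun x => F x (x/ε)) :=
    hFcont2.comp (continuous_id.prodMk (continuous_id.div_const ε))
  -- the travel-time identity along the trajectory
  have hΘ : ∀ s ∈ Set.uIcc (0:ℝ) (t₀/ε),
      HasDerivAt (fun s' => ∫ u in (x₀/ε)..(η s'), F (ε*u) u) 1 s := by
    intro s hs
    rw [huIcc] at hs
    have hQz : HasDerivAt (fun z => ∫ u in (x₀/ε)..z, F (ε*u) u) (F (ε * η s) (η s)) (η s) :=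
      intervalIntegral.integral_hasDerivAt_right (hQcont.intervalIntegrable _ _)
        (hQcont.stronglyMeasurableAtFilter _ _) hQcont.continuousAt
    have hcomp := hQz.comp s (hηd s hs)
    refine hcomp.congr_deriv ?_
    simp only [hFdef]
    exact inv_mul_cancel₀ (hspos (ε * η s) (η s)).ne'
  have hΘint := intervalIntegral.integral_eq_sub_of_hasDerivAt hΘ
    (intervalIntegrable_const (c := (1:ℝ)))
  have hΘval : (∫ u in (x₀/ε)..(η (t₀/ε)), F (ε*u) u) = t₀/ε := by
    have h1 : (∫ s in (0:ℝ)..(t₀/ε), (1:ℝ)) = t₀/ε := by simp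
    have h2 : (∫ u in (x₀/ε)..(η 0), F (ε*u) u) = 0 := by rw [hη0]; simp
    rw [h1, h2, sub_zero] at hΘint
    exact hΘint.symm
  have hP1 : (∫ x in x₀..X, F x (x/ε)) = t₀ := by
    have hcv := intervalIntegral.integral_comp_smul_deriv
      (f := fun u => ε * u) (f' := fun _ => ε) (g := fun x => F x (x/ε))
      (a := x₀/ε) (b := η (t₀/ε))
      (fun u _ => by simpa using ((hasDerivAt_id u).const_mul ε)) continuousOn_const hgc
    have h2 : ∀ u : ℝ, F (ε * u) (ε * u / ε) = F (ε*u) u := by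
      intro u; rw [mul_div_cancel_left₀ _ hε0.ne']
    simp only [Function.comp, smul_eq_mul] at hcv
    simp only [h2] at hcv
    rw [intervalIntegral.integral_const_mul, hΘval] at hcv
    have hl1 : ε * (x₀/ε) = x₀ := by field_simp
    have hl3 : ε * (t₀/ε) = t₀ := by field_simp
    rw [hl1, hl3, ← hXdef] at hcv
    exact hcv.symm
  -- bounds on X
  have hintsqrt : IntervalIntegrable
      (fun s => Real.sqrt (2 * (r - a (ε * η s) * b (η s)))) volume 0 (t₀/ε) := by
    apply ContinuousOn.intervalIntegrable
    rw [huIcc]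
    apply Real.continuous_sqrt.comp_continuousOn
    refine continuousOn_const.mul (continuousOn_const.sub (ContinuousOn.mul ?_ ?_))
    · exact haCont.comp_continuousOn (continuousOn_const.mul hηcont)
    · exact hb.comp_continuousOn hηcont
  have hηed := intervalIntegral.integral_eq_sub_of_hasDerivAt
    (f := η) (f' := fun s => Real.sqrt (2 * (r - a (ε * η s) * b (η s))))
    (a := 0) (b := t₀/ε) (fun s hs => hηd s (huIcc ▸ hs)) hintsqrt
  have hηlo : (t₀/ε) * Real.sqrt (2*r) ≤ η (t₀/ε) - x₀/ε := by
    have h1 : (∫ s in (0:ℝ)..(t₀/ε), Real.sqrt (2*r))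
        ≤ ∫ s in (0:ℝ)..(t₀/ε), Real.sqrt (2 * (r - a (ε * η s) * b (η s))) :=
      intervalIntegral.integral_mono_on hτpos.le intervalIntegrable_const hintsqrt
        (fun s _ => Real.sqrt_le_sqrt (by nlinarith [hvlo (ε * η s) (η s)]))
    rw [hηed, hη0, intervalIntegral.integral_const] at h1
    simpa only [sub_zero, smul_eq_mul] using h1
  have hηhi : η (t₀/ε) - x₀/ε ≤ (t₀/ε) * Real.sqrt (2*(r+Vn)) := by
    have h1 : (∫ s in (0:ℝ)..(t₀/ε), Real.sqrt (2 * (r - a (ε * η s) * b (η s))))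
        ≤ ∫ s in (0:ℝ)..(t₀/ε), Real.sqrt (2*(r+Vn)) :=
      intervalIntegral.integral_mono_on hτpos.le hintsqrt intervalIntegrable_const
        (fun s _ => Real.sqrt_le_sqrt (by nlinarith [hvhi (ε * η s) (η s)]))
    rw [hηed, hη0, intervalIntegral.integral_const] at h1
    simpa only [sub_zero, smul_eq_mul] using h1
  have hXeq : X - x₀ = ε * (η (t₀/ε) - x₀/ε) := by
    have hl1 : ε * (x₀/ε) = x₀ := by field_simp
    rw [hXdef, mul_sub, hl1]
  have hXlo : x₀ + t₀ * Real.sqrt (2*r) ≤ X := by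
    have h1 := mul_le_mul_of_nonneg_left hηlo hε0.le
    rw [← hXeq] at h1
    have hl3 : ε * (t₀/ε) = t₀ := by field_simp
    have h2 : ε * ((t₀/ε) * Real.sqrt (2*r)) = t₀ * Real.sqrt (2*r) := by
      rw [← mul_assoc, hl3]
    linarith [h2 ▸ h1]
  have hc₀T : t₀ * Real.sqrt (2*(r+Vn)) ≤ c₀ := by
    rw [hc₀]
    exact mul_le_mul ht₀T (Real.sqrt_le_sqrt (by linarith)) (Real.sqrt_nonneg _) hT.le
  have hXhi : X ≤ x₀ + c₀ := by
    have h1 := mul_le_mul_of_nonneg_left hηhi hε0.le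
    rw [← hXeq] at h1
    have hl3 : ε * (t₀/ε) = t₀ := by field_simp
    have h2 : ε * ((t₀/ε) * Real.sqrt (2*(r+Vn))) = t₀ * Real.sqrt (2*(r+Vn)) := by
      rw [← mul_assoc, hl3]
    linarith [h2 ▸ h1, hc₀T]
  have hXx₀ : x₀ ≤ X := by
    have h1 : 0 ≤ t₀ * Real.sqrt (2*r) := mul_nonneg ht₀0.le (Real.sqrt_nonneg _)
    linarith
    -- memberships
  have hXI : X ∈ I₀ := ⟨by linarith, by linarith⟩
  have hx₀I : x₀ ∈ I₀ := ⟨by linarith, by linarith [hc₀pos]⟩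
  have hsubI : Set.Icc x₀ X ⊆ I₀ := fun z hz => ⟨by linarith [hz.1], by linarith [hz.2]⟩
  -- the averaged identity for c₁
  have hc₁G : (∫ x in x₀..c₁, G x) = t₀ := by
    simp only [hGdef, hFdef]; exact hc₁t
  -- minimum of G on [x₀, x₀+c₀]
  obtain ⟨w, hwJ, hwmin⟩ := (isCompact_Icc (a := x₀) (b := x₀ + c₀)).exists_isMinOn
    (Set.nonempty_Icc.2 (by linarith)) hGcont.continuousOn
  have hwI : w ∈ I₀ := ⟨by linarith [hwJ.1], by linarith [hwJ.2]⟩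
  have hm0 : 0 < G w := hGpos w
  -- c₁ is in range
  have hc₁hi : c₁ ≤ x₀ + c₀ := by
    have h1 : ((c₁:ℝ) - x₀) * (Real.sqrt (2*(r+Vn)))⁻¹ ≤ ∫ x in x₀..c₁, G x := by
      have h2 := intervalIntegral.integral_mono_on hc₁
        (intervalIntegrable_const : IntervalIntegrable _ volume x₀ c₁)
        (hGcont.intervalIntegrable _ _) (fun x _ => hGge x)
      rw [intervalIntegral.integral_const, smul_eq_mul] at h2
      exact h2
    rw [hc₁G] at h1
    have h3 := mul_le_mul_of_nonneg_right h1 h2rVpos.le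
    rw [mul_assoc, inv_mul_cancel₀ h2rVpos.ne', mul_one] at h3
    linarith [hc₀T]
  -- M estimate
  have hcontM : Continuous (fun x => F x₀ (x/ε)) := (hFcontx x₀).comp (continuous_id.div_const ε)
  have hM1 : |∫ x in x₀..X, (F x₀ (x/ε) - G x₀)| ≤ ε * G x₀ := by
    have hsplit : (∫ x in x₀..X, (F x₀ (x/ε) - G x₀))
        = (∫ x in x₀..X, F x₀ (x/ε)) - (X - x₀) * G x₀ := by
      rw [intervalIntegral.integral_sub (hcontM.intervalIntegrable _ _) intervalIntegrable_const,
        intervalIntegral.integral_const, smul_eq_mul]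
    have hcv := intervalIntegral.integral_comp_smul_deriv
      (f := fun v => ε * v) (f' := fun _ => ε) (g := fun x => F x₀ (x/ε))
      (a := x₀/ε) (b := X/ε) (fun v _ => by simpa using ((hasDerivAt_id v).const_mul ε))
      continuousOn_const hcontM
    have h2 : ∀ v : ℝ, F x₀ (ε * v / ε) = F x₀ v := fun v => by
      rw [mul_div_cancel_left₀ _ hε0.ne']
    simp only [Function.comp, smul_eq_mul] at hcv
    simp only [h2] at hcv
    rw [intervalIntegral.integral_const_mul] at hcv
    have hl1 : ε * (x₀/ε) = x₀ := by field_simp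
    have hl2 : ε * (X/ε) = X := by field_simp
    rw [hl1, hl2] at hcv
    have hper := periodic_avg_bound (hFcontx x₀) (hFper x₀)
      ((div_le_div_iff_of_pos_right hε0).2 hXx₀)
    have habs : (∫ y in (0:ℝ)..1, |F x₀ y|) = ∫ y in (0:ℝ)..1, F x₀ y := by
      apply intervalIntegral.integral_congr
      intro y _
      exact abs_of_pos (hFpos x₀ y)
    rw [habs] at hper
    have hGx₀ : (∫ y in (0:ℝ)..1, F x₀ y) = G x₀ := by simp only [hGdef]
    rw [hGx₀] at hper
    have hform : (∫ x in x₀..X, F x₀ (x/ε)) - (X - x₀) * G x₀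
        = ε * ((∫ y in x₀/ε..X/ε, F x₀ y) - (X/ε - x₀/ε) * G x₀) := by
      rw [← hcv, mul_sub]
      congr 1
      have h4 : ε * ((X/ε - x₀/ε) * G x₀) = (ε * (X/ε - x₀/ε)) * G x₀ := by ring
      rw [h4, mul_sub, hl1, hl2]
    rw [hsplit, hform, abs_mul, abs_of_pos hε0]
    exact mul_le_mul_of_nonneg_left hper hε0.le
  -- G' facts
  have hG'eq : G' = deriv G := funext fun x => ((hGderiv x).deriv).symm
  have hG'meas : Measurable G' := hG'eq ▸ measurable_deriv G
  have hG'bd : ∀ u ∈ I₀, |G' u| ≤ Sg/2 * G u := by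
    intro u hu
    have h3 : (∫ y in (0:ℝ)..1, |dF u y|) ≤ ∫ y in (0:ℝ)..1, Sg/2 * F u y :=
      intervalIntegral.integral_mono_on zero_le_one
        ((hdFcontx u).abs.intervalIntegrable _ _)
        ((continuous_const.mul (hFcontx u)).intervalIntegrable _ _)
        (fun y _ => hdFbd u hu y)
    rw [intervalIntegral.integral_const_mul] at h3
    have h4 : |G' u| ≤ ∫ y in (0:ℝ)..1, |dF u y| := by
      have h5 : G' u = ∫ y in (0:ℝ)..1, dF u y := by simp only [hG'def]
      rw [h5]
      exact intervalIntegral.abs_integral_le_integral_abs zero_le_one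
    have h6 : (Sg/2) * (∫ y in (0:ℝ)..1, F u y) = Sg/2 * G u := by simp only [hGdef]
    exact h4.trans (h3.trans_eq h6)
  have hG'le : ∀ u ∈ I₀, |G' u| ≤ Sg/2 * (Real.sqrt (2*r))⁻¹ := fun u hu =>
    (hG'bd u hu).trans (mul_le_mul_of_nonneg_left (hGle u) (by linarith))
  have hG'int : ∀ p q, p ∈ I₀ → q ∈ I₀ → IntervalIntegrable G' volume p q := by
    intro p q hp hq
    rw [intervalIntegrable_iff]
    have hfin : volume (Set.uIoc p q) < ⊤ := by rw [Set.uIoc]; exact measure_Ioc_lt_top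
    refine (MeasureTheory.integrableOn_const
        (C := Sg/2 * (Real.sqrt (2*r))⁻¹) hfin.ne).mono'
      (hG'meas.aestronglyMeasurable.restrict) ?_
    rw [ae_restrict_iff' measurableSet_uIoc]
    refine Filter.Eventually.of_forall (fun u hu => ?_)
    have huI : u ∈ I₀ := by
      have h1 : u ∈ Set.uIcc p q := Set.uIoc_subset_uIcc hu
      rcases le_total p q with h | h
      · rw [Set.uIcc_of_le h] at h1
        exact ⟨le_trans hp.1 h1.1, le_trans h1.2 hq.2⟩
      · rw [Set.uIcc_of_ge h] at h1
        exact ⟨le_trans hq.1 h1.1, le_trans h1.2 hp.2⟩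
    rw [Real.norm_eq_abs]
    exact hG'le u huI
  -- pointwise FTC identity in the first variable
  have hstuff : ∀ x ∈ Set.uIcc x₀ X, F x (x/ε) - G x - (F x₀ (x/ε) - G x₀)
      = ∫ u in x₀..x, (dF u (x/ε) - G' u) := by
    intro x hx
    rw [Set.uIcc_of_le hXx₀] at hx
    have hxI : x ∈ I₀ := hsubI hx
    have hder : ∀ u ∈ Set.uIcc x₀ x,
        HasDerivAt (fun u' => F u' (x/ε) - G u') (dF u (x/ε) - G' u) u :=
      fun u _ => ((hdF (x/ε) u).sub (hGderiv u))
    have hint : IntervalIntegrable (fun u => dF u (x/ε) - G' u) volume x₀ x :=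
      IntervalIntegrable.sub
        (((hdFcont2.comp (continuous_id.prodMk continuous_const))).intervalIntegrable _ _)
        (hG'int x₀ x hx₀I hxI)
    have h1 := intervalIntegral.integral_eq_sub_of_hasDerivAt hder hint
    rw [h1]
  -- the E-decomposition
  have hcont1 : Continuous (fun x => F x (x/ε) - G x) := hgc.sub hGcont
  have hcont2 : Continuous (fun x => F x₀ (x/ε) - G x₀) := hcontM.sub continuous_const
  have hE1 : (∫ x in x₀..X, (F x (x/ε) - G x))
      = (∫ x in x₀..X, (F x₀ (x/ε) - G x₀))
        + ∫ x in x₀..X, (∫ u in x₀..x, (dF u (x/ε) - G' u)) := by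
    have h1 : (∫ x in x₀..X, (F x (x/ε) - G x))
        = (∫ x in x₀..X, (F x₀ (x/ε) - G x₀))
          + ∫ x in x₀..X, (F x (x/ε) - G x - (F x₀ (x/ε) - G x₀)) := by
      have hadd := intervalIntegral.integral_add (hcont2.intervalIntegrable (μ := volume) x₀ X)
        ((hcont1.sub hcont2).intervalIntegrable (μ := volume) x₀ X)
      simp only [Pi.sub_apply] at hadd
      rw [← hadd]
      apply intervalIntegral.integral_congr
      intro x _
      ring
    rw [h1]
    congr 1
    exact intervalIntegral.integral_congr hstuff
  -- swap the triangle integral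
  set clamp : ℝ → ℝ := fun u => max x₀ (min u X) with hclampdef
  have hclampcont : Continuous clamp := by
    rw [hclampdef]; exact continuous_const.max (continuous_id.min continuous_const)
  have hclampI : ∀ u, clamp u ∈ I₀ := fun u => by
    rw [hclampdef]
    exact hsubI ⟨le_max_left _ _, max_le hXx₀ (min_le_right _ _)⟩
  have hclampid : ∀ u ∈ Set.Icc x₀ X, clamp u = u := fun u hu => by
    rw [hclampdef]
    simp only []
    rw [min_eq_left hu.2, max_eq_right hu.1]
  clear_value clamp
  have hgcmeas : Measurable
      (Function.uncurry (fun u x => dF (clamp u) (x/ε) - G' (clamp u))) := by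
    apply Measurable.sub
    · exact (hdFcont2.comp ((hclampcont.comp continuous_fst).prodMk
        (continuous_snd.div_const ε))).measurable
    · exact hG'meas.comp (hclampcont.measurable.comp measurable_fst)
  have hgcbd : ∀ u x, |dF (clamp u) (x/ε) - G' (clamp u)| ≤ Sg * (Real.sqrt (2*r))⁻¹ := by
    intro u x
    have h1 := hdFbd (clamp u) (hclampI u) (x/ε)
    have h2 := hG'le (clamp u) (hclampI u)
    have h3 := mul_le_mul_of_nonneg_left (hFle (clamp u) (x/ε)) (by linarith : (0:ℝ) ≤ Sg/2)
    calc |dF (clamp u) (x/ε) - G' (clamp u)| ≤ |dF (clamp u) (x/ε)| + |G' (clamp u)| :=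
      abs_sub _ _
    _ ≤ Sg/2 * (Real.sqrt (2*r))⁻¹ + Sg/2 * (Real.sqrt (2*r))⁻¹ := by
      have h4 := h1.trans h3
      linarith
    _ = Sg * (Real.sqrt (2*r))⁻¹ := by ring
  have hswap := triangle_swap hXx₀ hgcmeas _ hgcbd
  have e1 : (∫ x in x₀..X, (∫ u in x₀..x, (dF u (x/ε) - G' u)))
      = ∫ x in x₀..X, (∫ u in x₀..x, (dF (clamp u) (x/ε) - G' (clamp u))) := by
    apply intervalIntegral.integral_congr
    intro x hx
    rw [Set.uIcc_of_le hXx₀] at hx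
    apply intervalIntegral.integral_congr
    intro u hu
    rw [Set.uIcc_of_le hx.1] at hu
    simp only [hclampid u ⟨hu.1, le_trans hu.2 hx.2⟩]
  have e2 : (∫ u in x₀..X, (∫ x in u..X, (dF (clamp u) (x/ε) - G' (clamp u))))
      = ∫ u in x₀..X, (∫ x in u..X, (dF u (x/ε) - G' u)) := by
    apply intervalIntegral.integral_congr
    intro u hu
    rw [Set.uIcc_of_le hXx₀] at hu
    simp only [hclampid u hu]
  have hD2 : (∫ x in x₀..X, (∫ u in x₀..x, (dF u (x/ε) - G' u)))
      = ∫ u in x₀..X, (∫ x in u..X, (dF u (x/ε) - G' u)) :=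
    e1.trans (hswap.trans e2)
  -- the inner estimate
  have hInner : ∀ u, u ∈ Set.Icc x₀ X →
      |∫ x in u..X, (dF u (x/ε) - G' u)| ≤ ε * (Sg/2 * G u) := by
    intro u hu
    have huI : u ∈ I₀ := hsubI hu
    have hcd : Continuous (fun x => dF u (x/ε)) := (hdFcontx u).comp (continuous_id.div_const ε)
    have hsplit : (∫ x in u..X, (dF u (x/ε) - G' u))
        = (∫ x in u..X, dF u (x/ε)) - (X - u) * G' u := by
      rw [intervalIntegral.integral_sub (hcd.intervalIntegrable _ _) intervalIntegrable_const,
        intervalIntegral.integral_const, smul_eq_mul]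
    have hcv := intervalIntegral.integral_comp_smul_deriv
      (f := fun v => ε * v) (f' := fun _ => ε) (g := fun x => dF u (x/ε))
      (a := u/ε) (b := X/ε) (fun v _ => by simpa using ((hasDerivAt_id v).const_mul ε))
      continuousOn_const hcd
    have h2 : ∀ v : ℝ, dF u (ε * v / ε) = dF u v := fun v => by
      rw [mul_div_cancel_left₀ _ hε0.ne']
    simp only [Function.comp, smul_eq_mul] at hcv
    simp only [h2] at hcv
    rw [intervalIntegral.integral_const_mul] at hcv
    have hl1 : ε * (u/ε) = u := by field_simp
    have hl2 : ε * (X/ε) = X := by field_simp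
    rw [hl1, hl2] at hcv
    have hper := periodic_avg_bound (hdFcontx u) (hdFper u)
      ((div_le_div_iff_of_pos_right hε0).2 (hu.2 : u ≤ X))
    have hbnd : (∫ y in (0:ℝ)..1, |dF u y|) ≤ Sg/2 * G u := by
      have h3 : (∫ y in (0:ℝ)..1, |dF u y|) ≤ ∫ y in (0:ℝ)..1, Sg/2 * F u y :=
        intervalIntegral.integral_mono_on zero_le_one
          ((hdFcontx u).abs.intervalIntegrable _ _)
          ((continuous_const.mul (hFcontx u)).intervalIntegrable _ _)
          (fun y _ => hdFbd u huI y)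
      rw [intervalIntegral.integral_const_mul] at h3
      have h6 : (Sg/2) * (∫ y in (0:ℝ)..1, F u y) = Sg/2 * G u := by simp only [hGdef]
      exact h3.trans_eq h6
    have hGu' : G' u = ∫ y in (0:ℝ)..1, dF u y := by simp only [hG'def]
    have hform : (∫ x in u..X, dF u (x/ε)) - (X - u) * G' u
        = ε * ((∫ y in u/ε..X/ε, dF u y) - (X/ε - u/ε) * ∫ y in (0:ℝ)..1, dF u y) := by
      rw [← hcv, hGu', mul_sub]
      congr 1
      have h4 : ε * ((X/ε - u/ε) * ∫ y in (0:ℝ)..1, dF u y)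
          = (ε * (X/ε - u/ε)) * ∫ y in (0:ℝ)..1, dF u y := by ring
      rw [h4, mul_sub, hl1, hl2]
    rw [hsplit, hform, abs_mul, abs_of_pos hε0]
    exact mul_le_mul_of_nonneg_left (hper.trans hbnd) hε0.le
  -- D estimate
  have hcc : (0:ℝ) ≤ ε * (Sg/2 * (κ * G w)) :=
    mul_nonneg hε0.le (mul_nonneg (by linarith) (mul_nonneg hκ0.le hm0.le))
  have hDest : |∫ u in x₀..X, (∫ x in u..X, (dF u (x/ε) - G' u))|
      ≤ c₀ * (ε * (Sg/2 * (κ * G w))) := by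
    have hb1 : ∀ᵐ u ∂(volume.restrict (Set.uIoc x₀ X)),
        ‖∫ x in u..X, (dF u (x/ε) - G' u)‖ ≤ ε * (Sg/2 * (κ * G w)) := by
      rw [ae_restrict_iff' measurableSet_uIoc]
      refine Filter.Eventually.of_forall (fun u hu => ?_)
      rw [Set.uIoc_of_le hXx₀] at hu
      have hu' : u ∈ Set.Icc x₀ X := ⟨hu.1.le, hu.2⟩
      rw [Real.norm_eq_abs]
      refine (hInner u hu').trans ?_
      have h5 := hGκ u (hsubI hu') w hwI
      have h6 : Sg/2 * G u ≤ Sg/2 * (κ * G w) :=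
        mul_le_mul_of_nonneg_left h5 (by linarith)
      exact mul_le_mul_of_nonneg_left h6 hε0.le
    have h7 := intervalIntegral.norm_integral_le_of_norm_le hXx₀
      (by
        have hb2 := (ae_restrict_iff' measurableSet_uIoc).1 hb1
        filter_upwards [hb2] with u hu hu'
        exact hu (by rwa [Set.uIoc_of_le hXx₀])) intervalIntegrable_const
    rw [Real.norm_eq_abs] at h7
    rw [intervalIntegral.integral_const, smul_eq_mul] at h7
    refine h7.trans ?_
    exact mul_le_mul_of_nonneg_right (by linarith) hcc
  -- total E bound
  have hEbd : |∫ x in x₀..X, (F x (x/ε) - G x)|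
      ≤ ε * (κ * G w) + c₀ * (ε * (Sg/2 * (κ * G w))) := by
    rw [hE1, hD2]
    refine (abs_add_le _ _).trans ?_
    have hMest := hM1.trans (mul_le_mul_of_nonneg_left (hGκ x₀ hx₀I w hwI) hε0.le)
    linarith [hDest]
  -- E equals ∫_X^{c₁} G
  have hEeq : (∫ x in x₀..X, (F x (x/ε) - G x)) = ∫ x in X..c₁, G x := by
    rw [intervalIntegral.integral_sub (hgc.intervalIntegrable _ _)
      (hGcont.intervalIntegrable _ _), hP1, ← hc₁G]
    exact intervalIntegral.integral_interval_sub_left (hGcont.intervalIntegrable _ _)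
      (hGcont.intervalIntegrable _ _)
  -- lower bound
  have hlow : |c₁ - X| * G w ≤ |∫ x in x₀..X, (F x (x/ε) - G x)| := by
    rw [hEeq]
    rcases le_total X c₁ with h | h
    · have h1 : (c₁ - X) * G w ≤ ∫ x in X..c₁, G x := by
        have h2 := intervalIntegral.integral_mono_on h
          (intervalIntegrable_const : IntervalIntegrable _ volume X c₁)
          (hGcont.intervalIntegrable _ _)
          (fun x hx => hwmin (⟨le_trans hXx₀ hx.1, le_trans hx.2 hc₁hi⟩ :
            x ∈ Set.Icc x₀ (x₀ + c₀)))
        rw [intervalIntegral.integral_const, smul_eq_mul] at h2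
        exact h2
      rw [abs_of_nonneg (by linarith : (0:ℝ) ≤ c₁ - X)]
      exact h1.trans (le_abs_self _)
    · have h1 : (X - c₁) * G w ≤ ∫ x in c₁..X, G x := by
        have h2 := intervalIntegral.integral_mono_on h
          (intervalIntegrable_const : IntervalIntegrable _ volume c₁ X)
          (hGcont.intervalIntegrable _ _)
          (fun x hx => hwmin (⟨le_trans hc₁ hx.1, le_trans hx.2 hXhi⟩ :
            x ∈ Set.Icc x₀ (x₀ + c₀)))
        rw [intervalIntegral.integral_const, smul_eq_mul] at h2
        exact h2
      rw [abs_of_nonpos (by linarith : c₁ - X ≤ 0), intervalIntegral.integral_symm, abs_neg]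
      have h3 : (∫ x in c₁..X, G x) ≤ |∫ x in c₁..X, G x| := le_abs_self _
      calc -(c₁ - X) * G w = (X - c₁) * G w := by ring
      _ ≤ ∫ x in c₁..X, G x := h1
      _ ≤ |∫ x in c₁..X, G x| := h3
  -- conclusion
  have h9 : |c₁ - X| * G w ≤ (ε * κ * (1 + Sg/2 * c₀)) * G w := by
    have h10 : ε * (κ * G w) + c₀ * (ε * (Sg/2 * (κ * G w)))
        = (ε * κ * (1 + Sg/2 * c₀)) * G w := by ring
    exact (hlow.trans hEbd).trans_eq h10
  have h11 : |c₁ - X| ≤ ε * κ * (1 + Sg/2 * c₀) := le_of_mul_le_mul_right h9 hm0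
  rw [abs_sub_comm] at h11
  rw [hCK]
  have h12 : ε * κ * (1 + Sg/2 * c₀) ≤ κ * (2 + c₀ / 2 * Sg) * ε := by
    have he : κ * (2 + c₀ / 2 * Sg) * ε - ε * κ * (1 + Sg/2 * c₀) = κ * ε := by ring
    have hnn : 0 ≤ κ * ε := mul_nonneg hκ0.le hε0.le
    linarith [he, hnn]
  linarith [h11, h12]
end

section
/- Let F ∈ C¹(ℝ × ℝ) be 1-periodic in its second variable, i.e., F(x, y+1) = F(x, y) for all x, y. Then for any real numbers a < b and any ε > 0, | ∫_a^b F(x, x/ε) dx − ∫_a^b ( ∫₀¹ F(x,y) dy ) dx | ≤ C·ε, where C = 2·max_{x∈[a,b]} ∫₀¹ |F(x,y)| dy + (b − a)·max_{x∈[a,b]} ∫₀¹ |∂F/∂x (x,y)| dy. -/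
open intervalIntegral MeasureTheory Set Metric Filter Asymptotics


/-- Bound on the mean-zero primitive of a continuous 1-periodic function. -/
lemma perBound (f : ℝ → ℝ) (hf : Continuous f) (hp : Function.Periodic f 1) (t : ℝ) :
    |(∫ y in (0:ℝ)..t, f y) - t * ∫ y in (0:ℝ)..1, f y| ≤ ∫ y in (0:ℝ)..1, |f y| := by
  have hint : ∀ u v : ℝ, IntervalIntegrable f volume u v := fun u v => hf.intervalIntegrable u v
  set I : ℝ := ∫ y in (0:ℝ)..1, f y with hI
  set P : ℝ → ℝ := fun t => (∫ y in (0:ℝ)..t, f y) - t * I with hPdef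
  have hP : Function.Periodic P 1 := by
    intro s
    have h1 : (∫ y in (0:ℝ)..(s+1), f y)
        = (∫ y in (0:ℝ)..s, f y) + ∫ y in s..(s+1), f y :=
      (integral_add_adjacent_intervals (hint _ _) (hint _ _)).symm
    have h2 : (∫ y in s..(s+1), f y) = ∫ y in (0:ℝ)..(0+1), f y :=
      hp.intervalIntegral_add_eq s 0
    simp only [hPdef, h1, h2, zero_add]
    simp only [hI]; ring
  have key : ∀ s : ℝ, 0 ≤ s → s ≤ 1 → |P s| ≤ ∫ y in (0:ℝ)..1, |f y| := by
    intro s h0 h1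
    have hsplit : I = (∫ y in (0:ℝ)..s, f y) + ∫ y in s..1, f y :=
      (integral_add_adjacent_intervals (hint _ _) (hint _ _)).symm
    have hPs : P s = (1 - s) * (∫ y in (0:ℝ)..s, f y) - s * (∫ y in s..1, f y) := by
      simp only [hPdef, hsplit]; ring
    have habs0 : |∫ y in (0:ℝ)..s, f y| ≤ ∫ y in (0:ℝ)..1, |f y| := by
      calc |∫ y in (0:ℝ)..s, f y| ≤ ∫ y in (0:ℝ)..s, |f y| :=
            intervalIntegral.abs_integral_le_integral_abs h0
        _ ≤ ∫ y in (0:ℝ)..1, |f y| := by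
            apply intervalIntegral.integral_mono_interval le_rfl h0 h1
            · filter_upwards with y using abs_nonneg _
            · exact hf.abs.intervalIntegrable _ _
    have habs1 : |∫ y in s..1, f y| ≤ ∫ y in (0:ℝ)..1, |f y| := by
      calc |∫ y in s..1, f y| ≤ ∫ y in s..1, |f y| :=
            intervalIntegral.abs_integral_le_integral_abs h1
        _ ≤ ∫ y in (0:ℝ)..1, |f y| := by
            apply intervalIntegral.integral_mono_interval h0 h1 le_rfl
            · filter_upwards with y using abs_nonneg _
            · exact hf.abs.intervalIntegrable _ _
    rw [hPs]
    calc |(1 - s) * (∫ y in (0:ℝ)..s, f y) - s * (∫ y in s..1, f y)|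
        ≤ |(1 - s) * (∫ y in (0:ℝ)..s, f y)| + |s * (∫ y in s..1, f y)| := abs_sub _ _
      _ = (1 - s) * |∫ y in (0:ℝ)..s, f y| + s * |∫ y in s..1, f y| := by
          rw [abs_mul, abs_mul, abs_of_nonneg (by linarith : (0:ℝ) ≤ 1 - s),
            abs_of_nonneg h0]
      _ ≤ (1 - s) * (∫ y in (0:ℝ)..1, |f y|) + s * (∫ y in (0:ℝ)..1, |f y|) := by
          gcongr <;> linarith
      _ = ∫ y in (0:ℝ)..1, |f y| := by ring
  have hfr : P t = P (Int.fract t) := by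
    have := hP.sub_int_mul_eq (x := t) (n := ⌊t⌋)
    rw [mul_one] at this
    rw [← this]; rfl
  have h := key (Int.fract t) (Int.fract_nonneg t) (Int.fract_lt_one t).le
  rw [← hfr] at h
  exact h


lemma paramDeriv (f f' : ℝ × ℝ → ℝ) (hf : Continuous f) (hf' : Continuous f')
    (hd : ∀ p : ℝ × ℝ, HasDerivAt (fun x => f (x, p.2)) (f' p) p.1) (u v x₀ : ℝ) :
    HasDerivAt (fun x => ∫ y in u..v, f (x, y)) (∫ y in u..v, f' (x₀, y)) x₀ := by
  obtain ⟨M, hM⟩ := (IsCompact.exists_bound_of_continuousOn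
    ((isCompact_Icc.prod isCompact_Icc :
      IsCompact (Icc (x₀ - 1) (x₀ + 1) ×ˢ Icc (min u v) (max u v)))) hf'.continuousOn)
  refine (intervalIntegral.hasDerivAt_integral_of_dominated_loc_of_deriv_le
    (F := fun x y => f (x, y)) (F' := fun x y => f' (x, y)) (bound := fun _ => M)
    (Metric.ball_mem_nhds x₀ one_pos) ?_ ?_ ?_ ?_ ?_ ?_).2
  · exact Filter.Eventually.of_forall fun x =>
      (hf.comp (continuous_const.prodMk continuous_id)).aestronglyMeasurable
  · exact (hf.comp (continuous_const.prodMk continuous_id)).intervalIntegrable _ _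
  · exact (hf'.comp (continuous_const.prodMk continuous_id)).aestronglyMeasurable
  · filter_upwards with y hy x hx
    refine hM (x, y) ⟨?_, ?_⟩
    · rw [mem_ball, Real.dist_eq] at hx
      constructor <;> [linarith [abs_le.1 hx.le] ; linarith [(abs_le.1 hx.le).2]]
    · exact Ioc_subset_Icc_self hy
  · exact intervalIntegrable_const
  · filter_upwards with y _ x _
    exact hd (x, y)


lemma movingDeriv (f : ℝ × ℝ → ℝ) (hf : Continuous f) {ε : ℝ} (hε : 0 < ε) (x₀ : ℝ) :
    HasDerivAt (fun x => ∫ y in (x₀ / ε)..(x / ε), f (x, y))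
      ((1 / ε) * f (x₀, x₀ / ε)) x₀ := by
  set t₀ := x₀ / ε with ht₀
  have hcont : ∀ x : ℝ, Continuous fun y => f (x, y) :=
    fun x => hf.comp (continuous_const.prodMk continuous_id)
  -- first summand: frozen integrand
  have h1 : HasDerivAt (fun x : ℝ => ∫ y in t₀..(x / ε), f (x₀, y))
      (f (x₀, t₀) * (1 / ε)) x₀ := by
    have hP : HasDerivAt (fun t => ∫ y in t₀..t, f (x₀, y)) (f (x₀, t₀)) t₀ :=
      intervalIntegral.integral_hasDerivAt_right
        ((hcont x₀).intervalIntegrable _ _)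
        ((hcont x₀).stronglyMeasurableAtFilter _ _)
        (hcont x₀).continuousAt
    have hg : HasDerivAt (fun x : ℝ => x / ε) (1 / ε) x₀ := by
      simpa using (hasDerivAt_id x₀).div_const ε
    simpa [ht₀, Function.comp_def] using hP.comp x₀ hg
  -- second summand: difference term, derivative 0
  have h2 : HasDerivAt (fun x : ℝ => ∫ y in t₀..(x / ε), (f (x, y) - f (x₀, y))) 0 x₀ := by
    rw [hasDerivAt_iff_isLittleO]
    rw [isLittleO_iff]
    intro c hc
    have hK : IsCompact ((Icc (x₀ - 1) (x₀ + 1)) ×ˢ (Icc (t₀ - 1 / ε) (t₀ + 1 / ε))) :=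
      isCompact_Icc.prod isCompact_Icc
    have huc := hK.uniformContinuousOn_of_continuous hf.continuousOn
    rw [Metric.uniformContinuousOn_iff] at huc
    obtain ⟨δ, hδ, hδ'⟩ := huc (c * ε) (mul_pos hc hε)
    filter_upwards [Metric.ball_mem_nhds x₀ (lt_min hδ one_pos)] with x hx
    rw [mem_ball, Real.dist_eq, lt_min_iff] at hx
    have hxK : x ∈ Icc (x₀ - 1) (x₀ + 1) := by
      have := abs_le.1 hx.2.le; constructor <;> linarith [this.1, this.2]
    have hdist : |x / ε - t₀| ≤ 1 / ε := by
      rw [ht₀, div_sub_div_same, abs_div, abs_of_pos hε]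
      gcongr
      exact hx.2.le
    have hyK : ∀ y ∈ Set.uIoc t₀ (x / ε), y ∈ Icc (t₀ - 1 / ε) (t₀ + 1 / ε) := by
      intro y hy
      rcases abs_le.1 hdist with ⟨hl, hr⟩
      rcases Set.mem_uIoc.1 hy with ⟨h1', h2'⟩ | ⟨h1', h2'⟩
      · exact ⟨by linarith [h1'.le], by linarith⟩
      · exact ⟨by linarith [h1'.le], by linarith⟩
    have hbound : ∀ y ∈ Set.uIoc t₀ (x / ε), ‖f (x, y) - f (x₀, y)‖ ≤ c * ε := by
      intro y hy
      have hp : (x, y) ∈ (Icc (x₀ - 1) (x₀ + 1)) ×ˢ (Icc (t₀ - 1 / ε) (t₀ + 1 / ε)) :=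
        ⟨hxK, hyK y hy⟩
      have hq : (x₀, y) ∈ (Icc (x₀ - 1) (x₀ + 1)) ×ˢ (Icc (t₀ - 1 / ε) (t₀ + 1 / ε)) :=
        ⟨by constructor <;> simp <;> linarith, hyK y hy⟩
      have hdd : dist ((x : ℝ), y) ((x₀ : ℝ), y) < δ := by
        rw [Prod.dist_eq]
        simp only [dist_self]
        rw [max_eq_left dist_nonneg, Real.dist_eq]
        exact hx.1
      have := hδ' _ hp _ hq hdd
      rw [Real.dist_eq] at this
      exact this.le
    calc ‖(∫ y in t₀..(x / ε), (f (x, y) - f (x₀, y)))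
            - (∫ y in t₀..(x₀ / ε), (f (x₀, y) - f (x₀, y))) - (x - x₀) • (0:ℝ)‖
        = ‖∫ y in t₀..(x / ε), (f (x, y) - f (x₀, y))‖ := by
          rw [← ht₀]
          simp
      _ ≤ c * ε * |x / ε - t₀| :=
          intervalIntegral.norm_integral_le_of_norm_le_const hbound
      _ ≤ c * ‖x - x₀‖ := by
          rw [ht₀, div_sub_div_same, abs_div, abs_of_pos hε, Real.norm_eq_abs]
          have : c * ε * (|x - x₀| / ε) = c * |x - x₀| := by field_simp
          rw [this]
  -- combine
  have hsum := h1.add h2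
  rw [add_zero] at hsum
  have heq : (fun x => ∫ y in t₀..(x / ε), f (x, y))
      =ᶠ[nhds x₀] fun x => (∫ y in t₀..(x / ε), f (x₀, y))
        + ∫ y in t₀..(x / ε), (f (x, y) - f (x₀, y)) := by
    filter_upwards with x
    rw [intervalIntegral.integral_sub ((hcont x).intervalIntegrable _ _)
      ((hcont x₀).intervalIntegrable _ _)]
    ring
  rw [show (1 / ε) * f (x₀, t₀) = f (x₀, t₀) * (1 / ε) from mul_comm _ _]
  exact hsum.congr_of_eventuallyEq heq

/-- Quantitative ergodic theorem for periodic functions in one dimension: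
the oscillatory integral of `F(x, x/ε)` differs from the integral of its
`y`-average by at most an explicit constant times `ε`. -/
theorem quantitative_ergodic
    (F : ℝ → ℝ → ℝ) (hF : ContDiff ℝ 1 fun q : ℝ × ℝ => F q.1 q.2)
    (hper : ∀ x y : ℝ, F x (y + 1) = F x y)
    (a b : ℝ) (hab : a < b) (ε : ℝ) (hε : 0 < ε)
    (C : ℝ)
    (hC : C = 2 * sSup ((fun x => ∫ y in (0 : ℝ)..1, |F x y|) '' Set.Icc a b)
      + (b - a) * sSup ((fun x => ∫ y in (0 : ℝ)..1,
          |deriv (fun x' => F x' y) x|) '' Set.Icc a b)) :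
    |(∫ x in a..b, F x (x / ε))
      - ∫ x in a..b, ∫ y in (0 : ℝ)..1, F x y| ≤ C * ε := by
  set f : ℝ × ℝ → ℝ := fun q => F q.1 q.2 with hfdef
  have hf : Continuous f := hF.continuous
  have hdiff : Differentiable ℝ f := hF.differentiable one_ne_zero
  set f' : ℝ × ℝ → ℝ := fun q => fderiv ℝ f q (1, 0) with hf'def
  have hf' : Continuous f' :=
    (hF.continuous_fderiv one_ne_zero).clm_apply continuous_const
  have hd : ∀ p : ℝ × ℝ, HasDerivAt (fun x => f (x, p.2)) (f' p) p.1 := by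
    rintro ⟨x, y⟩
    have h1 : HasFDerivAt f (fderiv ℝ f (x, y)) (x, y) := (hdiff (x, y)).hasFDerivAt
    have h2 : HasDerivAt (fun x' : ℝ => ((x' : ℝ), y)) ((1 : ℝ), (0 : ℝ)) x :=
      (hasDerivAt_id x).prodMk (hasDerivAt_const x y)
    exact h1.comp_hasDerivAt x h2
  have hd' : ∀ (x y : ℝ), HasDerivAt (fun x' => F x' y) (f' (x, y)) x :=
    fun x y => hd (x, y)
  have hder_eq : ∀ x y : ℝ, deriv (fun x' => F x' y) x = f' (x, y) :=
    fun x y => (hd' x y).deriv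
  have hf'per : ∀ x y : ℝ, f' (x, y + 1) = f' (x, y) := by
    intro x y
    have h1 := hd' x (y + 1)
    rw [show (fun x' => F x' (y + 1)) = fun x' => F x' y from
      funext fun x' => hper x' y] at h1
    exact h1.unique (hd' x y)
  have hFcont : ∀ x : ℝ, Continuous fun y => F x y :=
    fun x => hf.comp (continuous_const.prodMk continuous_id)
  have hf'cont : ∀ x : ℝ, Continuous fun y => f' (x, y) :=
    fun x => hf'.comp (continuous_const.prodMk continuous_id)
  set G : ℝ → ℝ := fun x => ∫ y in (0:ℝ)..1, F x y with hGdef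
  set G' : ℝ → ℝ := fun x => ∫ y in (0:ℝ)..1, f' (x, y) with hG'def
  have hG : ∀ x₀ : ℝ, HasDerivAt G (G' x₀) x₀ :=
    fun x₀ => paramDeriv f f' hf hf' hd 0 1 x₀
  set φ : ℝ → ℝ := fun x => ∫ y in (0:ℝ)..(x / ε), F x y with hφdef
  set K : ℝ → ℝ := fun x => (∫ y in (0:ℝ)..(x / ε), f' (x, y)) - (x / ε) * G' x
    with hKdef
  have hφ : ∀ x₀ : ℝ, HasDerivAt φ
      ((∫ y in (0:ℝ)..(x₀ / ε), f' (x₀, y)) + (1 / ε) * F x₀ (x₀ / ε)) x₀ := by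
    intro x₀
    have ha := paramDeriv f f' hf hf' hd 0 (x₀ / ε) x₀
    have hb := movingDeriv f hf hε x₀
    refine (ha.add hb).congr_of_eventuallyEq ?_
    filter_upwards with x
    exact (integral_add_adjacent_intervals ((hFcont x).intervalIntegrable _ _)
      ((hFcont x).intervalIntegrable _ _)).symm
  set ψ : ℝ → ℝ := fun x => ε * φ x - x * G x with hψdef
  have hψ : ∀ x : ℝ, HasDerivAt ψ (F x (x / ε) - G x + ε * K x) x := by
    intro x
    have h := ((hφ x).const_mul ε).sub ((hasDerivAt_id x).mul (hG x))
    refine h.congr_deriv ?_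
    simp only [hKdef, id]
    field_simp
    ring
  -- continuity facts
  have hGcont : Continuous G :=
    intervalIntegral.continuous_parametric_intervalIntegral_of_continuous'
      (f := fun x y => F x y) hf 0 1
  have hG'cont : Continuous G' :=
    intervalIntegral.continuous_parametric_intervalIntegral_of_continuous'
      (f := fun x y => f' (x, y)) hf' 0 1
  have hKcont : Continuous K := by
    apply Continuous.sub
    · exact intervalIntegral.continuous_parametric_intervalIntegral_of_continuous
        (f := fun x y => f' (x, y)) hf' (continuous_id.div_const ε)
    · exact (continuous_id.div_const ε).mul hG'cont
  have hFosc : Continuous fun x => F x (x / ε) :=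
    hf.comp (continuous_id.prodMk (continuous_id.div_const ε))
  have hDcont : Continuous fun x => F x (x / ε) - G x + ε * K x :=
    (hFosc.sub hGcont).add (continuous_const.mul hKcont)
  -- FTC
  have hFTC : (∫ x in a..b, (F x (x / ε) - G x + ε * K x)) = ψ b - ψ a :=
    intervalIntegral.integral_eq_sub_of_hasDerivAt (fun x _ => hψ x)
      (hDcont.intervalIntegrable a b)
  have hsplit : (∫ x in a..b, (F x (x / ε) - G x + ε * K x))
      = ((∫ x in a..b, F x (x / ε)) - ∫ x in a..b, G x) + ε * ∫ x in a..b, K x := by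
    rw [intervalIntegral.integral_add (f := fun x => F x (x / ε) - G x) (g := fun x => ε * K x) ((hFosc.sub hGcont).intervalIntegrable _ _)
      ((continuous_const.mul hKcont : Continuous fun x => ε * K x).intervalIntegrable _ _),
      intervalIntegral.integral_sub (hFosc.intervalIntegrable _ _)
        (hGcont.intervalIntegrable _ _),
      intervalIntegral.integral_const_mul]
  -- sSup bounds
  set MF : ℝ := sSup ((fun x => ∫ y in (0:ℝ)..1, |F x y|) '' Set.Icc a b) with hMFdef
  set MK : ℝ := sSup ((fun x => ∫ y in (0:ℝ)..1, |f' (x, y)|) '' Set.Icc a b) with hMKdef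
  have hCrw : C = 2 * MF + (b - a) * MK := by
    have him : (fun x => ∫ y in (0:ℝ)..1, |deriv (fun x' => F x' y) x|)
        = fun x => ∫ y in (0:ℝ)..1, |f' (x, y)| :=
      funext fun x => intervalIntegral.integral_congr fun y _ => by rw [hder_eq]
    rw [hC, him]
  have hMFb : ∀ x ∈ Set.Icc a b, (∫ y in (0:ℝ)..1, |F x y|) ≤ MF := by
    intro x hx
    have hbdd : BddAbove ((fun x => ∫ y in (0:ℝ)..1, |F x y|) '' Set.Icc a b) :=
      IsCompact.bddAbove_image isCompact_Icc
        (intervalIntegral.continuous_parametric_intervalIntegral_of_continuous'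
          (f := fun x y => |F x y|) hf.abs 0 1).continuousOn
    exact le_csSup hbdd ⟨x, hx, rfl⟩
  have hMKb : ∀ x ∈ Set.Icc a b, (∫ y in (0:ℝ)..1, |f' (x, y)|) ≤ MK := by
    intro x hx
    have hbdd : BddAbove ((fun x => ∫ y in (0:ℝ)..1, |f' (x, y)|) '' Set.Icc a b) :=
      IsCompact.bddAbove_image isCompact_Icc
        (intervalIntegral.continuous_parametric_intervalIntegral_of_continuous'
          (f := fun x y => |f' (x, y)|) hf'.abs 0 1).continuousOn
    exact le_csSup hbdd ⟨x, hx, rfl⟩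
  -- pointwise bounds from periodicity
  have hψb : ∀ x ∈ Set.Icc a b, |ψ x| ≤ ε * MF := by
    intro x hx
    have hp : Function.Periodic (fun y => F x y) 1 := fun y => hper x y
    have hPB := perBound (fun y => F x y) (hFcont x) hp (x / ε)
    have hψx : ψ x = ε * ((∫ y in (0:ℝ)..(x / ε), F x y) - (x / ε) * G x) := by
      simp only [hψdef, hφdef]
      field_simp
    rw [hψx, abs_mul, abs_of_pos hε]
    exact mul_le_mul_of_nonneg_left (hPB.trans (hMFb x hx)) hε.le
  have hKb : ∀ x ∈ Set.Icc a b, |K x| ≤ MK := by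
    intro x hx
    have hp : Function.Periodic (fun y => f' (x, y)) 1 := fun y => hf'per x y
    have hPB := perBound (fun y => f' (x, y)) (hf'cont x) hp (x / ε)
    exact hPB.trans (hMKb x hx)
  have hintK : |∫ x in a..b, K x| ≤ MK * |b - a| := by
    rw [← Real.norm_eq_abs]
    apply intervalIntegral.norm_integral_le_of_norm_le_const
    intro x hx
    rw [Set.uIoc_of_le hab.le] at hx
    rw [Real.norm_eq_abs]
    exact hKb x (Set.Ioc_subset_Icc_self hx)
  -- final計算
  have hmema : a ∈ Set.Icc a b := ⟨le_rfl, hab.le⟩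
  have hmemb : b ∈ Set.Icc a b := ⟨hab.le, le_rfl⟩
  have key : (∫ x in a..b, F x (x / ε)) - (∫ x in a..b, G x)
      = ψ b - ψ a - ε * ∫ x in a..b, K x := by
    rw [hsplit] at hFTC; linarith [hFTC]
  calc |(∫ x in a..b, F x (x / ε)) - ∫ x in a..b, ∫ y in (0:ℝ)..1, F x y|
      = |ψ b - ψ a - ε * ∫ x in a..b, K x| := by rw [key]
    _ ≤ |ψ b| + |ψ a| + |ε * ∫ x in a..b, K x| := by
        calc |ψ b - ψ a - ε * ∫ x in a..b, K x|
            ≤ |ψ b - ψ a| + |ε * ∫ x in a..b, K x| := abs_sub _ _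
          _ ≤ |ψ b| + |ψ a| + |ε * ∫ x in a..b, K x| := by
              have := abs_sub (ψ b) (ψ a); linarith
    _ ≤ ε * MF + ε * MF + ε * (MK * (b - a)) := by
        have h1 := hψb b hmemb
        have h2 := hψb a hmema
        have h3 : |ε * ∫ x in a..b, K x| ≤ ε * (MK * (b - a)) := by
          rw [abs_mul, abs_of_pos hε]
          refine mul_le_mul_of_nonneg_left ?_ hε.le
          rw [abs_of_pos (sub_pos.2 hab)] at hintK
          exact hintK
        linarith
    _ = C * ε := by rw [hCrw]; ring
end
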